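/- arXiv:cs/0611129 — 2 statements merged into one kernel-verified Lean document; each statement's English description precedes it below -/
import Mathlib

section
/- Let 𝒰, 𝒱, 𝒰̂ be finite types, let (U,V) be a random pair in 𝒰 × 𝒱, and let d: 𝒰 × 𝒰̂ → ℝ≥0 be a distortion measure. The Wyner–Ziv rate–distortion function R_{U|V}(D) := inf { I(U;A) − I(V;A) : A a random variable in a finite type with at most |𝒰|+1 elements, jointly distributed with (U,V), conditionally independent of V given U, such that there exists ψ: 𝒜 × 𝒱 → 𝒰̂ with E[d(U,ψ(A,V))] ≤ D } is, as a function of D on the set of D ≥ 0 for which the constraint set is nonempty, (i) nonincreasing and (ii) convex: for such D₁, D₂ and θ ∈ [0,1], R_{U|V}(θD₁ + (1−θ)D₂) ≤ θ·R_{U|V}(D₁) + (1−θ)·R_{U|V}(D₂). -/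
open scoped BigOperators

/-- Mutual information of a joint probability mass function `P` on `α × β`
(natural logarithm, with `0·log 0 = 0`). -/
noncomputable def miJoint {α β : Type} [Fintype α] [Fintype β] (P : α → β → ℝ) : ℝ :=
  ∑ x, ∑ y, P x y * Real.log (P x y / ((∑ y', P x y') * (∑ x', P x' y)))

/-- The constraint set of the Wyner--Ziv rate--distortion function of a pair `(U,V)`
with joint law `qUV`, reproduction alphabet `𝒰h` and distortion measure `d`, at
distortion level `D`: values `I(U;A) − I(V;A)` over joint laws `q` of `(A,U,V)` with
`A` in an auxiliary alphabet of `|𝒰|+1` elements, `(U,V)`-marginal `qUV`, `A`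
conditionally independent of `V` given `U`, admitting `ψ` with `E[d(U,ψ(A,V))] ≤ D`. -/
def WZset {𝒰 𝒱 𝒰h : Type} [Fintype 𝒰] [Fintype 𝒱] [Fintype 𝒰h]
    (qUV : 𝒰 × 𝒱 → ℝ) (d : 𝒰 → 𝒰h → ℝ) (D : ℝ) : Set ℝ :=
  {ρ | ∃ q : Fin (Fintype.card 𝒰 + 1) × 𝒰 × 𝒱 → ℝ,
    (∀ z, 0 ≤ q z) ∧ (∑ z, q z = 1) ∧
    (∀ u v, (∑ a, q (a, u, v)) = qUV (u, v)) ∧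
    (∀ a u v, 0 < (∑ a', ∑ v', q (a', u, v')) →
      q (a, u, v) * (∑ a', ∑ v', q (a', u, v')) =
        (∑ v', q (a, u, v')) * (∑ a', q (a', u, v))) ∧
    (∃ ψ : Fin (Fintype.card 𝒰 + 1) → 𝒱 → 𝒰h,
      (∑ a, ∑ u, ∑ v, q (a, u, v) * d u (ψ a v)) ≤ D) ∧
    ρ = miJoint (fun (u : 𝒰) (a : Fin (Fintype.card 𝒰 + 1)) => ∑ v, q (a, u, v))
        - miJoint (fun (v : 𝒱) (a : Fin (Fintype.card 𝒰 + 1)) => ∑ u, q (a, u, v))}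

/-- The Wyner--Ziv rate--distortion function `R_{U|V}(D)`. -/
noncomputable def WZ {𝒰 𝒱 𝒰h : Type} [Fintype 𝒰] [Fintype 𝒱] [Fintype 𝒰h]
    (qUV : 𝒰 × 𝒱 → ℝ) (d : 𝒰 → 𝒰h → ℝ) (D : ℝ) : ℝ :=
  sInf (WZset qUV d D)

set_option linter.unusedSectionVars false
set_option linter.unusedVariables false


lemma term_bound {s mx my : ℝ} (hs : 0 ≤ s) (hsx : s ≤ mx) (hsy : s ≤ my)
    (hx1 : mx ≤ 1) (hy1 : my ≤ 1) :
    |s * Real.log (s / (mx * my))| ≤ 1 := by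
  rcases eq_or_lt_of_le hs with h0 | h0
  · simp [← h0]
  · have hmx : 0 < mx := lt_of_lt_of_le h0 hsx
    have hmy : 0 < my := lt_of_lt_of_le h0 hsy
    have hprod : 0 < mx * my := mul_pos hmx hmy
    have hle1 : mx * my ≤ 1 := by nlinarith
    have hges : s * s ≤ mx * my := by nlinarith
    have hratio_pos : 0 < s / (mx * my) := div_pos h0 hprod
    have hlow : s ≤ s / (mx * my) := by
      rw [le_div_iff₀ hprod]; nlinarith
    have hhigh : s / (mx * my) ≤ 1 / s := by
      rw [div_le_div_iff₀ hprod h0]; nlinarith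
    rw [abs_le]
    constructor
    · have l1 : Real.log s ≤ Real.log (s / (mx * my)) := Real.log_le_log h0 hlow
      have l2 : Real.log (1/s) ≤ 1/s - 1 := Real.log_le_sub_one_of_pos (by positivity)
      have l3 : -(1/s - 1) ≤ Real.log s := by
        rw [one_div, Real.log_inv] at l2; rw [one_div]; linarith
      have : s * (-(1/s-1)) ≤ s * Real.log (s / (mx*my)) := by
        apply mul_le_mul_of_nonneg_left (le_trans l3 l1) hs
      have hs1 : s * (1/s) = 1 := by field_simp
      nlinarith
    · have l1 : Real.log (s / (mx * my)) ≤ Real.log (1/s) := Real.log_le_log hratio_pos hhigh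
      have l2 : Real.log (1/s) ≤ 1/s - 1 := Real.log_le_sub_one_of_pos (by positivity)
      have : s * Real.log (s/(mx*my)) ≤ s * (1/s - 1) :=
        mul_le_mul_of_nonneg_left (le_trans l1 l2) hs
      have hs1 : s * (1/s) = 1 := by field_simp
      nlinarith

lemma miJoint_abs_le {α β : Type} [Fintype α] [Fintype β] (P : α → β → ℝ)
    (h0 : ∀ x y, 0 ≤ P x y) (h1 : ∑ x, ∑ y, P x y = 1) :
    |miJoint P| ≤ (Fintype.card α : ℝ) * (Fintype.card β : ℝ) := by
  have key : ∀ x y, |P x y * Real.log (P x y / ((∑ y', P x y') * (∑ x', P x' y)))| ≤ 1 := by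
    intro x y
    apply term_bound (h0 x y)
    · exact Finset.single_le_sum (fun y' _ => h0 x y') (Finset.mem_univ y)
    · exact Finset.single_le_sum (fun x' _ => h0 x' y) (Finset.mem_univ x)
    · rw [← h1]
      exact Finset.single_le_sum (f := fun x => ∑ y', P x y')
        (fun x' _ => Finset.sum_nonneg fun y' _ => h0 x' y') (Finset.mem_univ x)
    · rw [← h1, Finset.sum_comm]
      exact Finset.single_le_sum (f := fun y => ∑ x', P x' y)
        (fun y' _ => Finset.sum_nonneg fun x' _ => h0 x' y') (Finset.mem_univ y)
  calc |miJoint P| ≤ ∑ x, |∑ y, P x y * Real.log (P x y / ((∑ y', P x y') * (∑ x', P x' y)))| :=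
        Finset.abs_sum_le_sum_abs _ _
    _ ≤ ∑ x : α, (Fintype.card β : ℝ) := by
        apply Finset.sum_le_sum
        intro x _
        calc |∑ y, P x y * Real.log (P x y / ((∑ y', P x y') * (∑ x', P x' y)))|
            ≤ ∑ y, |P x y * Real.log (P x y / ((∑ y', P x y') * (∑ x', P x' y)))| :=
              Finset.abs_sum_le_sum_abs _ _
          _ ≤ ∑ y : β, (1:ℝ) := Finset.sum_le_sum fun y _ => key x y
          _ = (Fintype.card β : ℝ) := by simp
    _ = (Fintype.card α : ℝ) * (Fintype.card β : ℝ) := by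
        simp [mul_comm]

lemma miJoint_mixture {α β ι : Type} [Fintype α] [Fintype β] [Fintype ι]
    [DecidableEq β] [DecidableEq ι]
    (J : Finset ι) (e : ι → β) (hInj : Set.InjOn e J)
    (w : ι → ℝ) (π : ι → α → ℝ) (p : α → ℝ)
    (hπ1 : ∀ j ∈ J, ∑ x, π j x = 1)
    (P : α → β → ℝ) (hP : ∀ x b, P x b = ∑ j ∈ J, if e j = b then w j * π j x else 0)
    (hmarg : ∀ x, ∑ j ∈ J, w j * π j x = p x) :
    miJoint P = ∑ j ∈ J, w j * ∑ x, π j x * Real.log (π j x / p x) := by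
  have hrow : ∀ x, ∑ b, P x b = p x := by
    intro x
    simp only [hP]
    rw [Finset.sum_comm]
    simpa using hmarg x
  have hPe : ∀ j ∈ J, ∀ x, P x (e j) = w j * π j x := by
    intro j hj x
    rw [hP]
    rw [Finset.sum_eq_single_of_mem j hj]
    · simp
    · intro j' hj' hne
      exact if_neg (fun he => hne (hInj hj' hj he))
  have hcol : ∀ j ∈ J, ∑ x', P x' (e j) = w j := by
    intro j hj
    simp only [hPe j hj]
    rw [← Finset.mul_sum, hπ1 j hj, mul_one]
  unfold miJoint
  rw [Finset.sum_comm]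
  rw [← Finset.sum_subset (Finset.subset_univ (J.image e))]
  · rw [Finset.sum_image (fun x hx y hy hxy => hInj hx hy hxy)]
    apply Finset.sum_congr rfl
    intro j hj
    rcases eq_or_ne (w j) 0 with hw0 | hw0
    · simp [hPe j hj, hw0]
    · rw [Finset.mul_sum]
      apply Finset.sum_congr rfl
      intro x _
      rw [hPe j hj, hrow x, hcol j hj]
      have : w j * π j x / (p x * w j) = π j x / p x := by
        rw [mul_comm (p x) (w j), mul_div_mul_left _ _ hw0]
      rw [this]; ring
  · intro b _ hb
    have hzero : ∀ x, P x b = 0 := by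
      intro x
      rw [hP]
      apply Finset.sum_eq_zero
      intro j hj
      rw [if_neg]
      intro he
      exact hb (Finset.mem_image.2 ⟨j, hj, he⟩)
    apply Finset.sum_eq_zero
    intro x _
    rw [hzero x, zero_mul]

lemma reduce_support {ι α : Type} [Fintype ι] [DecidableEq ι] [Fintype α]
    (w : ι → ℝ) (π : ι → α → ℝ) (dv φv : ι → ℝ)
    (hw : ∀ j, 0 ≤ w j) (hπ1 : ∀ j, ∑ x, π j x = 1) :
    ∃ w' : ι → ℝ, (∀ j, 0 ≤ w' j) ∧ (∀ j, w' j ≠ 0 → w j ≠ 0) ∧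
      (Finset.univ.filter (fun j => w' j ≠ 0)).card ≤ Fintype.card α + 1 ∧
      (∀ x, ∑ j, w' j * π j x = ∑ j, w j * π j x) ∧
      (∑ j, w' j * dv j = ∑ j, w j * dv j) ∧
      (∑ j, w' j * φv j ≤ ∑ j, w j * φv j) := by
  suffices H : ∀ k : ℕ, ∀ w : ι → ℝ, (∀ j, 0 ≤ w j) →
      (Finset.univ.filter (fun j => w j ≠ 0)).card = k →
      ∃ w' : ι → ℝ, (∀ j, 0 ≤ w' j) ∧ (∀ j, w' j ≠ 0 → w j ≠ 0) ∧
      (Finset.univ.filter (fun j => w' j ≠ 0)).card ≤ Fintype.card α + 1 ∧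
      (∀ x, ∑ j, w' j * π j x = ∑ j, w j * π j x) ∧
      (∑ j, w' j * dv j = ∑ j, w j * dv j) ∧
      (∑ j, w' j * φv j ≤ ∑ j, w j * φv j) by
    exact H _ w hw rfl
  intro k
  induction k using Nat.strong_induction_on with
  | _ k IH =>
  intro w hw hcard
  set s := Finset.univ.filter (fun j => w j ≠ 0) with hs
  by_cases hk : k ≤ Fintype.card α + 1
  · exact ⟨w, hw, fun j h => h, by rw [hcard]; exact hk, fun x => rfl, rfl, le_refl _⟩
  push_neg at hk
  -- linear dependence of the vectors (π j, dv j) over the support s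
  have hdep : ¬ LinearIndependent ℝ (fun j : {j // j ∈ s} => ((π j.1, dv j.1) : (α → ℝ) × ℝ)) := by
    intro h
    have hle := h.fintype_card_le_finrank
    rw [Fintype.card_coe] at hle
    rw [Module.finrank_prod, Module.finrank_pi, Module.finrank_self] at hle
    omega
  obtain ⟨g, hgsum, i0, hgi0⟩ := Fintype.not_linearIndependent_iff.1 hdep
  classical
  set C : ι → ℝ := fun j => if h : j ∈ s then g ⟨j, h⟩ else 0 with hC
  have hCoff : ∀ j, j ∉ s → C j = 0 := fun j h => dif_neg h
  have hCz : ∑ j, C j • ((π j, dv j) : (α → ℝ) × ℝ) = 0 := by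
    rw [← Finset.sum_subset (Finset.subset_univ s)
      (fun j _ hj => by rw [hCoff j hj, zero_smul])]
    rw [← Finset.sum_attach s (fun j => C j • ((π j, dv j) : (α → ℝ) × ℝ))]
    rw [← hgsum]
    apply Finset.sum_congr rfl
    intro j _
    congr 1
    exact dif_pos j.2
  have hCπ : ∀ x, ∑ j, C j * π j x = 0 := by
    intro x
    have h1 := congrArg Prod.fst hCz
    rw [Prod.fst_sum] at h1
    have h2 := congrFun h1 x
    simpa using h2
  have hCd : ∑ j, C j * dv j = 0 := by
    have h1 := congrArg Prod.snd hCz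
    rw [Prod.snd_sum] at h1
    simpa using h1
  have hCsum : ∑ j, C j = 0 := by
    have := hCπ
    calc ∑ j, C j = ∑ j, ∑ x, C j * π j x := by
          apply Finset.sum_congr rfl
          intro j _
          rw [← Finset.mul_sum, hπ1 j, mul_one]
      _ = ∑ x, ∑ j, C j * π j x := Finset.sum_comm
      _ = 0 := by simp [hCπ]
  have hCne : ∃ j, C j ≠ 0 := ⟨i0.1, by rw [hC]; simpa [dif_pos i0.2] using hgi0⟩
  -- choose direction
  set D : ι → ℝ := if 0 ≤ ∑ j, C j * φv j then C else fun j => -C j with hD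
  have hDπ : ∀ x, ∑ j, D j * π j x = 0 := by
    intro x; rw [hD]; split
    · exact hCπ x
    · simp only [neg_mul]
      rw [Finset.sum_neg_distrib, hCπ x, neg_zero]
  have hDd : ∑ j, D j * dv j = 0 := by
    rw [hD]; split
    · exact hCd
    · simp only [neg_mul]
      rw [Finset.sum_neg_distrib, hCd, neg_zero]
  have hDsum : ∑ j, D j = 0 := by
    rw [hD]; split
    · exact hCsum
    · rw [Finset.sum_neg_distrib, hCsum, neg_zero]
  have hDφ : 0 ≤ ∑ j, D j * φv j := by
    rw [hD]; split
    · assumption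
    · simp only [neg_mul]
      rw [Finset.sum_neg_distrib]
      linarith [not_le.1 (by assumption : ¬ 0 ≤ ∑ j, C j * φv j)]
  have hDoff : ∀ j, j ∉ s → D j = 0 := by
    intro j h; rw [hD]; split
    · exact hCoff j h
    · show -C j = 0
      rw [hCoff j h, neg_zero]
  have hDne : ∃ j, D j ≠ 0 := by
    obtain ⟨j, hj⟩ := hCne
    refine ⟨j, ?_⟩
    rw [hD]; split
    · exact hj
    · simpa using hj
  have hDpos : ∃ j, 0 < D j := by
    by_contra hno
    push_neg at hno
    obtain ⟨j, hj⟩ := hDne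
    have : ∀ j ∈ Finset.univ, D j = 0 :=
      (Finset.sum_eq_zero_iff_of_nonpos (fun j _ => hno j)).1 hDsum
    exact hj (this j (Finset.mem_univ j))
  set T := Finset.univ.filter (fun j => 0 < D j) with hT
  have hTne : T.Nonempty := by
    obtain ⟨j, hj⟩ := hDpos
    exact ⟨j, Finset.mem_filter.2 ⟨Finset.mem_univ j, hj⟩⟩
  set t := T.inf' hTne (fun j => w j / D j) with ht
  have hTs : ∀ j ∈ T, j ∈ s := by
    intro j hj
    have hDj : 0 < D j := (Finset.mem_filter.1 hj).2
    by_contra hns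
    rw [hDoff j hns] at hDj
    exact lt_irrefl _ hDj
  have ht0 : 0 ≤ t := by
    apply Finset.le_inf'
    intro j hj
    have hDj : 0 < D j := (Finset.mem_filter.1 hj).2
    exact div_nonneg (hw j) hDj.le
  obtain ⟨j0, hj0T, hj0⟩ := Finset.exists_mem_eq_inf' hTne (fun j => w j / D j)
  have hDj0 : 0 < D j0 := (Finset.mem_filter.1 hj0T).2
  set w1 : ι → ℝ := fun j => w j - t * D j with hw1eq
  have hw1eq : ∀ j, w1 j = w j - t * D j := fun j => rfl
  have hw1 : ∀ j, 0 ≤ w1 j := by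
    intro j
    rcases le_or_gt (D j) 0 with h | h
    · have : t * D j ≤ 0 := mul_nonpos_of_nonneg_of_nonpos ht0 h
      simp only [hw1eq]; linarith [hw j]
    · have hjT : j ∈ T := Finset.mem_filter.2 ⟨Finset.mem_univ j, h⟩
      have : t ≤ w j / D j := Finset.inf'_le _ hjT
      have : t * D j ≤ w j := by
        rw [← le_div_iff₀ h] at *; linarith
      simp only [hw1eq]; linarith
  have hw1j0 : w1 j0 = 0 := by
    rw [hw1eq, ht, hj0]
    field_simp
    ring
  have hsupp1 : Finset.univ.filter (fun j => w1 j ≠ 0) ⊆ s.erase j0 := by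
    intro j hj
    have hj' : w1 j ≠ 0 := (Finset.mem_filter.1 hj).2
    have hjs : j ∈ s := by
      by_contra hns
      have hwj : w j = 0 := by
        by_contra hwne
        exact hns (Finset.mem_filter.2 ⟨Finset.mem_univ j, hwne⟩)
      apply hj'
      simp only [hw1eq, hwj, hDoff j hns, mul_zero, sub_zero]
    apply Finset.mem_erase.2 ⟨?_, hjs⟩
    intro he
    rw [he] at hj'
    exact hj' hw1j0
  have hcard1 : (Finset.univ.filter (fun j => w1 j ≠ 0)).card < k := by
    calc (Finset.univ.filter (fun j => w1 j ≠ 0)).card ≤ (s.erase j0).card :=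
          Finset.card_le_card hsupp1
      _ < s.card := Finset.card_erase_lt_of_mem (hTs j0 hj0T)
      _ = k := hcard
  obtain ⟨w', hw'0, hw'supp, hw'card, hw'π, hw'd, hw'φ⟩ :=
    IH _ hcard1 w1 hw1 rfl
  refine ⟨w', hw'0, ?_, hw'card, ?_, ?_, ?_⟩
  · intro j hj
    have : w1 j ≠ 0 := hw'supp j hj
    have hjs : j ∈ s.erase j0 := hsupp1 (Finset.mem_filter.2 ⟨Finset.mem_univ j, this⟩)
    exact (Finset.mem_filter.1 (Finset.mem_of_mem_erase hjs)).2
  · intro x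
    rw [hw'π x]
    simp only [hw1eq, sub_mul]
    rw [Finset.sum_sub_distrib]
    have : ∑ j, t * D j * π j x = t * ∑ j, D j * π j x := by
      rw [Finset.mul_sum]; apply Finset.sum_congr rfl; intros; ring
    rw [this, hDπ x, mul_zero, sub_zero]
  · rw [hw'd]
    simp only [hw1eq, sub_mul]
    rw [Finset.sum_sub_distrib]
    have : ∑ j, t * D j * dv j = t * ∑ j, D j * dv j := by
      rw [Finset.mul_sum]; apply Finset.sum_congr rfl; intros; ring
    rw [this, hDd, mul_zero, sub_zero]
  · apply le_trans hw'φ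
    simp only [hw1eq, sub_mul]
    rw [Finset.sum_sub_distrib]
    have h2 : ∑ j, t * D j * φv j = t * ∑ j, D j * φv j := by
      rw [Finset.mul_sum]; apply Finset.sum_congr rfl; intros; ring
    rw [h2]
    nlinarith [mul_nonneg ht0 hDφ]

noncomputable def atomW {𝒰 𝒱 A : Type} [Fintype 𝒰] [Fintype 𝒱]
    (q : A × 𝒰 × 𝒱 → ℝ) (a : A) : ℝ := ∑ u, ∑ v, q (a, u, v)

noncomputable def atomR {𝒰 𝒱 A : Type} [Fintype 𝒰] [Fintype 𝒱]
    (qUV : 𝒰 × 𝒱 → ℝ) (q : A × 𝒰 × 𝒱 → ℝ) (a : A) (u : 𝒰) (v : 𝒱) : ℝ :=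
  if 0 < atomW q a then q (a, u, v) / atomW q a else qUV (u, v)

section Atom
variable {𝒰 𝒱 A : Type} [Fintype 𝒰] [Fintype 𝒱] [Fintype A]
  (qUV : 𝒰 × 𝒱 → ℝ) (q : A × 𝒰 × 𝒱 → ℝ)

lemma atomW_nonneg (h0 : ∀ z, 0 ≤ q z) (a : A) : 0 ≤ atomW q a :=
  Finset.sum_nonneg fun u _ => Finset.sum_nonneg fun v _ => h0 _

lemma q_le_atomW (h0 : ∀ z, 0 ≤ q z) (a : A) (u : 𝒰) (v : 𝒱) :
    q (a, u, v) ≤ atomW q a := by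
  calc q (a, u, v) ≤ ∑ v', q (a, u, v') :=
        Finset.single_le_sum (f := fun v' => q (a, u, v')) (fun v' _ => h0 _) (Finset.mem_univ v)
    _ ≤ atomW q a :=
        Finset.single_le_sum (f := fun u => ∑ v', q (a, u, v'))
          (fun u' _ => Finset.sum_nonneg fun v' _ => h0 _) (Finset.mem_univ u)

lemma q_eq_zero_of_atomW (h0 : ∀ z, 0 ≤ q z) (a : A) (hw : ¬ 0 < atomW q a)
    (u : 𝒰) (v : 𝒱) : q (a, u, v) = 0 := by
  have h1 := q_le_atomW q h0 a u v
  have h2 := h0 (a, u, v)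
  have h3 := atomW_nonneg q h0 a
  have : atomW q a = 0 := le_antisymm (not_lt.1 hw) h3
  linarith

lemma atomR_nonneg (hq0 : ∀ uv, 0 ≤ qUV uv) (h0 : ∀ z, 0 ≤ q z) (a : A) (u : 𝒰) (v : 𝒱) :
    0 ≤ atomR qUV q a u v := by
  unfold atomR; split
  · exact div_nonneg (h0 _) (atomW_nonneg q h0 a)
  · exact hq0 _

lemma atomR_mul (h0 : ∀ z, 0 ≤ q z) (a : A) (u : 𝒰) (v : 𝒱) :
    atomW q a * atomR qUV q a u v = q (a, u, v) := by
  unfold atomR; split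
  · rw [mul_div_cancel₀]
    exact ne_of_gt (by assumption)
  · rw [q_eq_zero_of_atomW q h0 a (by assumption)]
    have : atomW q a = 0 := le_antisymm (not_lt.1 (by assumption)) (atomW_nonneg q h0 a)
    rw [this, zero_mul]

lemma atomR_sum_one (hq1 : ∑ uv, qUV uv = 1) (a : A) :
    ∑ u, ∑ v, atomR qUV q a u v = 1 := by
  unfold atomR
  split
  · rw [show ∑ u, ∑ v, q (a,u,v) / atomW q a = (∑ u, ∑ v, q (a,u,v)) / atomW q a by
      rw [Finset.sum_div]; exact Finset.sum_congr rfl fun u _ => by rw [Finset.sum_div]]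
    exact div_self (ne_of_gt (by assumption))
  · rw [← Fintype.sum_prod_type]
    exact hq1

lemma atomR_ci (hq0 : ∀ uv, 0 ≤ qUV uv) (h0 : ∀ z, 0 ≤ q z)
    (hmarg : ∀ u v, (∑ a, q (a, u, v)) = qUV (u, v))
    (hci : ∀ a u v, 0 < (∑ a', ∑ v', q (a', u, v')) →
      q (a, u, v) * (∑ a', ∑ v', q (a', u, v')) =
        (∑ v', q (a, u, v')) * (∑ a', q (a', u, v)))
    (a : A) (u : 𝒰) (v : 𝒱) :
    atomR qUV q a u v * (∑ v', qUV (u, v')) = (∑ v', atomR qUV q a u v') * qUV (u, v) := by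
  have hpUeq : (∑ a', ∑ v', q (a', u, v')) = ∑ v', qUV (u, v') := by
    rw [Finset.sum_comm]
    exact Finset.sum_congr rfl fun v' _ => hmarg u v'
  have hpU0 : 0 ≤ ∑ v', qUV (u, v') := Finset.sum_nonneg fun v' _ => hq0 _
  rcases eq_or_lt_of_le hpU0 with hz | hp
  · -- pU u = 0 : everything vanishes
    have hz' : (∑ v', qUV (u, v')) = 0 := hz.symm
    have hqUV0 : ∀ v', qUV (u, v') = 0 := by
      intro v'
      have h1 : qUV (u, v') ≤ ∑ v'', qUV (u, v'') :=
        Finset.single_le_sum (f := fun v'' => qUV (u, v'')) (fun v'' _ => hq0 _)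
          (Finset.mem_univ v')
      have := hq0 (u, v')
      linarith
    rw [hz', mul_zero, hqUV0 v, mul_zero]
  · have hq_u0 := hci a u v (by rw [hpUeq]; exact hp)
    rw [hpUeq] at hq_u0
    have hmargv : (∑ a', q (a', u, v)) = qUV (u, v) := hmarg u v
    rw [hmargv] at hq_u0
    unfold atomR
    split
    · rename_i hw
      rw [div_mul_eq_mul_div, hq_u0,
        show ∑ v', q (a,u,v') / atomW q a = (∑ v', q (a,u,v')) / atomW q a from
          (Finset.sum_div _ _ _).symm]
      rw [div_mul_eq_mul_div]
    · rw [show (∑ v', qUV (u, v')) * qUV (u,v) = qUV (u,v) * ∑ v', qUV (u,v') from mul_comm _ _]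

lemma atomR_zero_of_pU (hq0 : ∀ uv, 0 ≤ qUV uv) (h0 : ∀ z, 0 ≤ q z)
    (hmarg : ∀ u v, (∑ a, q (a, u, v)) = qUV (u, v))
    (a : A) (u : 𝒰) (hz : (∑ v', qUV (u, v')) = 0) (v : 𝒱) :
    atomR qUV q a u v = 0 := by
  have hqUV0 : ∀ v', qUV (u, v') = 0 := by
    intro v'
    have h1 : qUV (u, v') ≤ ∑ v'', qUV (u, v'') :=
      Finset.single_le_sum (f := fun v'' => qUV (u, v'')) (fun v'' _ => hq0 _)
        (Finset.mem_univ v')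
    have := hq0 (u, v')
    linarith
  have hq0' : q (a, u, v) = 0 := by
    have h1 : q (a, u, v) ≤ ∑ a', q (a', u, v) :=
      Finset.single_le_sum (f := fun a' => q (a', u, v)) (fun a' _ => h0 _)
        (Finset.mem_univ a)
    rw [hmarg u v, hqUV0 v] at h1
    linarith [h0 (a, u, v)]
  unfold atomR; split
  · rw [hq0', zero_div]
  · exact hqUV0 v

lemma rate_eq_U {𝒰 𝒱 A : Type} [Fintype 𝒰] [Fintype 𝒱] [Fintype A] [DecidableEq A]
    (qUV : 𝒰 × 𝒱 → ℝ) (q : A × 𝒰 × 𝒱 → ℝ) (hq1 : ∑ uv, qUV uv = 1)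
    (h0 : ∀ z, 0 ≤ q z) (hmarg : ∀ u v, (∑ a, q (a, u, v)) = qUV (u, v)) :
    miJoint (fun (u : 𝒰) (a : A) => ∑ v, q (a, u, v)) =
      ∑ a, atomW q a * ∑ u, (∑ v, atomR qUV q a u v) *
        Real.log ((∑ v, atomR qUV q a u v) / (∑ v', qUV (u, v'))) := by
  have h := miJoint_mixture (α := 𝒰) (β := A) (ι := A) Finset.univ id
    (fun a ha b hb hab => hab)
    (atomW q) (fun a u => ∑ v, atomR qUV q a u v) (fun u => ∑ v', qUV (u, v'))
    (fun a _ => atomR_sum_one qUV q hq1 a)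
    (fun (u : 𝒰) (a : A) => ∑ v, q (a, u, v))
    ?_ ?_
  · exact h
  · intro x b
    simp only [id_eq]
    rw [Finset.sum_ite_eq' Finset.univ b
      (fun a => atomW q a * ∑ v, atomR qUV q a x v), if_pos (Finset.mem_univ b)]
    rw [Finset.mul_sum]
    exact Finset.sum_congr rfl fun v _ => (atomR_mul qUV q h0 b x v).symm
  · intro x
    have : ∀ a, atomW q a * ∑ v, atomR qUV q a x v = ∑ v, q (a, x, v) := by
      intro a
      rw [Finset.mul_sum]
      exact Finset.sum_congr rfl fun v _ => atomR_mul qUV q h0 a x v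
    simp only [this]
    rw [Finset.sum_comm]
    exact Finset.sum_congr rfl fun v _ => hmarg x v

lemma rate_eq_V {𝒰 𝒱 A : Type} [Fintype 𝒰] [Fintype 𝒱] [Fintype A] [DecidableEq A]
    (qUV : 𝒰 × 𝒱 → ℝ) (q : A × 𝒰 × 𝒱 → ℝ) (hq1 : ∑ uv, qUV uv = 1)
    (h0 : ∀ z, 0 ≤ q z) (hmarg : ∀ u v, (∑ a, q (a, u, v)) = qUV (u, v)) :
    miJoint (fun (v : 𝒱) (a : A) => ∑ u, q (a, u, v)) =
      ∑ a, atomW q a * ∑ v, (∑ u, atomR qUV q a u v) *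
        Real.log ((∑ u, atomR qUV q a u v) / (∑ u', qUV (u', v))) := by
  have h := miJoint_mixture (α := 𝒱) (β := A) (ι := A) Finset.univ id
    (fun a ha b hb hab => hab)
    (atomW q) (fun a v => ∑ u, atomR qUV q a u v) (fun v => ∑ u', qUV (u', v))
    (fun a _ => by rw [Finset.sum_comm]; exact atomR_sum_one qUV q hq1 a)
    (fun (v : 𝒱) (a : A) => ∑ u, q (a, u, v))
    ?_ ?_
  · exact h
  · intro x b
    simp only [id_eq]
    rw [Finset.sum_ite_eq' Finset.univ b
      (fun a => atomW q a * ∑ u, atomR qUV q a u x), if_pos (Finset.mem_univ b)]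
    rw [Finset.mul_sum]
    exact Finset.sum_congr rfl fun u _ => (atomR_mul qUV q h0 b u x).symm
  · intro x
    have : ∀ a, atomW q a * ∑ u, atomR qUV q a u x = ∑ u, q (a, u, x) := by
      intro a
      rw [Finset.mul_sum]
      exact Finset.sum_congr rfl fun u _ => atomR_mul qUV q h0 a u x
    simp only [this]
    rw [Finset.sum_comm]
    exact Finset.sum_congr rfl fun u _ => hmarg u x

lemma atom_margU {𝒰 𝒱 A : Type} [Fintype 𝒰] [Fintype 𝒱] [Fintype A]
    (qUV : 𝒰 × 𝒱 → ℝ) (q : A × 𝒰 × 𝒱 → ℝ)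
    (h0 : ∀ z, 0 ≤ q z) (hmarg : ∀ u v, (∑ a, q (a, u, v)) = qUV (u, v)) (u : 𝒰) :
    ∑ a, atomW q a * (∑ v, atomR qUV q a u v) = ∑ v, qUV (u, v) := by
  have : ∀ a, atomW q a * ∑ v, atomR qUV q a u v = ∑ v, q (a, u, v) := by
    intro a
    rw [Finset.mul_sum]
    exact Finset.sum_congr rfl fun v _ => atomR_mul qUV q h0 a u v
  simp only [this]
  rw [Finset.sum_comm]
  exact Finset.sum_congr rfl fun v _ => hmarg u v

lemma atom_dist {𝒰 𝒱 A : Type} [Fintype 𝒰] [Fintype 𝒱] [Fintype A]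
    (qUV : 𝒰 × 𝒱 → ℝ) (q : A × 𝒰 × 𝒱 → ℝ) (h0 : ∀ z, 0 ≤ q z) (g : A → 𝒰 → 𝒱 → ℝ) :
    ∑ a, atomW q a * (∑ u, ∑ v, atomR qUV q a u v * g a u v) =
      ∑ a, ∑ u, ∑ v, q (a, u, v) * g a u v := by
  apply Finset.sum_congr rfl
  intro a _
  rw [Finset.mul_sum]
  apply Finset.sum_congr rfl
  intro u _
  rw [Finset.mul_sum]
  apply Finset.sum_congr rfl
  intro v _
  rw [← mul_assoc, atomR_mul qUV q h0 a u v]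

lemma WZset_bddBelow {𝒰 𝒱 𝒰h : Type} [Fintype 𝒰] [Fintype 𝒱] [Fintype 𝒰h]
    (qUV : 𝒰 × 𝒱 → ℝ) (d : 𝒰 → 𝒰h → ℝ) (D : ℝ) :
    BddBelow (WZset qUV d D) := by
  classical
  set N : ℝ := (Fintype.card 𝒰 : ℝ) * ((Fintype.card 𝒰 + 1 : ℕ) : ℝ)
    + (Fintype.card 𝒱 : ℝ) * ((Fintype.card 𝒰 + 1 : ℕ) : ℝ) with hN
  refine ⟨-N, fun ρ hρ => ?_⟩
  obtain ⟨q, h0, h1, hmarg, hci, hψ, hρeq⟩ := hρ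
  have htot : ∑ a, ∑ u, ∑ v, q (a, u, v) = 1 := by
    rw [← h1, Fintype.sum_prod_type]
    exact Finset.sum_congr rfl fun a _ => by rw [Fintype.sum_prod_type]
  have hb1 : |miJoint (fun (u : 𝒰) (a : Fin (Fintype.card 𝒰 + 1)) => ∑ v, q (a, u, v))| ≤
      (Fintype.card 𝒰 : ℝ) * ((Fintype.card 𝒰 + 1 : ℕ) : ℝ) := by
    have := miJoint_abs_le (fun (u : 𝒰) (a : Fin (Fintype.card 𝒰 + 1)) => ∑ v, q (a, u, v))
      (fun u a => Finset.sum_nonneg fun v _ => h0 _) ?_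
    · simpa using this
    · rw [Finset.sum_comm]
      exact htot
  have hb2 : |miJoint (fun (v : 𝒱) (a : Fin (Fintype.card 𝒰 + 1)) => ∑ u, q (a, u, v))| ≤
      (Fintype.card 𝒱 : ℝ) * ((Fintype.card 𝒰 + 1 : ℕ) : ℝ) := by
    have := miJoint_abs_le (fun (v : 𝒱) (a : Fin (Fintype.card 𝒰 + 1)) => ∑ u, q (a, u, v))
      (fun v a => Finset.sum_nonneg fun u _ => h0 _) ?_
    · simpa using this
    · rw [Finset.sum_comm]
      rw [← htot]
      exact Finset.sum_congr rfl fun a _ => Finset.sum_comm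
  rw [hρeq, hN]
  have hx := abs_le.1 hb1
  have hy := abs_le.1 hb2
  linarith [hx.1, hx.2, hy.1, hy.2]

lemma WZ_convex_point {𝒰 𝒱 𝒰h : Type}
    [Fintype 𝒰] [Nonempty 𝒰] [Fintype 𝒱] [Nonempty 𝒱] [Fintype 𝒰h] [Nonempty 𝒰h]
    (qUV : 𝒰 × 𝒱 → ℝ) (hq0 : ∀ uv, 0 ≤ qUV uv) (hq1 : ∑ uv, qUV uv = 1)
    (d : 𝒰 → 𝒰h → ℝ) (D₁ D₂ θ : ℝ) (hθ0 : 0 ≤ θ) (hθ1 : θ ≤ 1)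
    {ρ₁ ρ₂ : ℝ} (h₁ : ρ₁ ∈ WZset qUV d D₁) (h₂ : ρ₂ ∈ WZset qUV d D₂) :
    ∃ ρ ∈ WZset qUV d (θ * D₁ + (1 - θ) * D₂), ρ ≤ θ * ρ₁ + (1 - θ) * ρ₂ := by
  classical
  obtain ⟨q₁, h10, h11, h1m, h1ci, ⟨ψ₁, hψ₁⟩, hρ₁⟩ := h₁
  obtain ⟨q₂, h20, h21, h2m, h2ci, ⟨ψ₂, hψ₂⟩, hρ₂⟩ := h₂
  have hθ1' : (0:ℝ) ≤ 1 - θ := by linarith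
  set pU : 𝒰 → ℝ := fun u => ∑ v, qUV (u, v) with hpU
  set pV : 𝒱 → ℝ := fun v => ∑ u, qUV (u, v) with hpV
  set w : (Fin (Fintype.card 𝒰 + 1) ⊕ Fin (Fintype.card 𝒰 + 1)) → ℝ := Sum.elim (fun a => θ * atomW q₁ a) (fun a => (1 - θ) * atomW q₂ a) with hw
  set r : (Fin (Fintype.card 𝒰 + 1) ⊕ Fin (Fintype.card 𝒰 + 1)) → 𝒰 → 𝒱 → ℝ := Sum.elim (atomR qUV q₁) (atomR qUV q₂) with hr
  set ψa : (Fin (Fintype.card 𝒰 + 1) ⊕ Fin (Fintype.card 𝒰 + 1)) → 𝒱 → 𝒰h := Sum.elim ψ₁ ψ₂ with hψa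
  set πf : (Fin (Fintype.card 𝒰 + 1) ⊕ Fin (Fintype.card 𝒰 + 1)) → 𝒰 → ℝ := fun j u => ∑ v, r j u v with hπf
  set νf : (Fin (Fintype.card 𝒰 + 1) ⊕ Fin (Fintype.card 𝒰 + 1)) → 𝒱 → ℝ := fun j v => ∑ u, r j u v with hνf
  set dval : (Fin (Fintype.card 𝒰 + 1) ⊕ Fin (Fintype.card 𝒰 + 1)) → ℝ := fun j => ∑ u, ∑ v, r j u v * d u (ψa j v) with hdval
  set φv : (Fin (Fintype.card 𝒰 + 1) ⊕ Fin (Fintype.card 𝒰 + 1)) → ℝ := fun j =>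
    (∑ u, πf j u * Real.log (πf j u / pU u)) -
    (∑ v, νf j v * Real.log (νf j v / pV v)) with hφv
  -- basic atom facts
  have hr0 : ∀ j u v, 0 ≤ r j u v := by
    intro j u v; cases j with
    | inl a => exact atomR_nonneg qUV q₁ hq0 h10 a u v
    | inr a => exact atomR_nonneg qUV q₂ hq0 h20 a u v
  have hπf1 : ∀ j, ∑ u, πf j u = 1 := by
    intro j; cases j with
    | inl a => exact atomR_sum_one qUV q₁ hq1 a
    | inr a => exact atomR_sum_one qUV q₂ hq1 a
  have hw0 : ∀ j, 0 ≤ w j := by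
    intro j; cases j with
    | inl a => exact mul_nonneg hθ0 (atomW_nonneg q₁ h10 a)
    | inr a => exact mul_nonneg hθ1' (atomW_nonneg q₂ h20 a)
  have hciR : ∀ j u v, r j u v * pU u = πf j u * qUV (u, v) := by
    intro j u v; cases j with
    | inl a => exact atomR_ci qUV q₁ hq0 h10 h1m h1ci a u v
    | inr a => exact atomR_ci qUV q₂ hq0 h20 h2m h2ci a u v
  have hrpU0 : ∀ j u, pU u = 0 → ∀ v, r j u v = 0 := by
    intro j u hu v; cases j with
    | inl a => exact atomR_zero_of_pU qUV q₁ hq0 h10 h1m a u hu v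
    | inr a => exact atomR_zero_of_pU qUV q₂ hq0 h20 h2m a u hu v
  have wmargU : ∀ u, ∑ j, w j * πf j u = pU u := by
    intro u
    rw [Fintype.sum_sum_type]
    have e1 : ∀ a : Fin (Fintype.card 𝒰 + 1), w (Sum.inl a) * πf (Sum.inl a) u
        = θ * (atomW q₁ a * (∑ v, atomR qUV q₁ a u v)) := fun a => by
      simp only [hw, hr, hπf, Sum.elim_inl]; ring
    have e2 : ∀ a : Fin (Fintype.card 𝒰 + 1), w (Sum.inr a) * πf (Sum.inr a) u
        = (1 - θ) * (atomW q₂ a * (∑ v, atomR qUV q₂ a u v)) := fun a => by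
      simp only [hw, hr, hπf, Sum.elim_inr]; ring
    simp only [e1, e2]
    rw [← Finset.mul_sum, ← Finset.mul_sum,
      atom_margU qUV q₁ h10 h1m u, atom_margU qUV q₂ h20 h2m u]
    rw [hpU]; ring
  have wdist : ∑ j, w j * dval j ≤ θ * D₁ + (1 - θ) * D₂ := by
    rw [Fintype.sum_sum_type]
    have e1 : ∀ a : Fin (Fintype.card 𝒰 + 1), w (Sum.inl a) * dval (Sum.inl a)
        = θ * (atomW q₁ a * (∑ u, ∑ v, atomR qUV q₁ a u v * d u (ψ₁ a v))) := fun a => by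
      simp only [hw, hr, hdval, hψa, Sum.elim_inl]; ring
    have e2 : ∀ a : Fin (Fintype.card 𝒰 + 1), w (Sum.inr a) * dval (Sum.inr a)
        = (1 - θ) * (atomW q₂ a * (∑ u, ∑ v, atomR qUV q₂ a u v * d u (ψ₂ a v))) := fun a => by
      simp only [hw, hr, hdval, hψa, Sum.elim_inr]; ring
    simp only [e1, e2]
    rw [← Finset.mul_sum, ← Finset.mul_sum,
      atom_dist qUV q₁ h10 (fun a u v => d u (ψ₁ a v)),
      atom_dist qUV q₂ h20 (fun a u v => d u (ψ₂ a v))]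
    have := mul_le_mul_of_nonneg_left hψ₁ hθ0
    have := mul_le_mul_of_nonneg_left hψ₂ hθ1'
    linarith
  have hrate : θ * ρ₁ + (1 - θ) * ρ₂ = ∑ j, w j * φv j := by
    have hρ₁' : ρ₁ = ∑ a : Fin (Fintype.card 𝒰 + 1), atomW q₁ a * φv (Sum.inl a) := by
      rw [hρ₁, rate_eq_U qUV q₁ hq1 h10 h1m, rate_eq_V qUV q₁ hq1 h10 h1m,
        ← Finset.sum_sub_distrib]
      apply Finset.sum_congr rfl
      intro a _
      simp only [hφv, hπf, hνf, hr, hpU, hpV, Sum.elim_inl]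
      ring
    have hρ₂' : ρ₂ = ∑ a : Fin (Fintype.card 𝒰 + 1), atomW q₂ a * φv (Sum.inr a) := by
      rw [hρ₂, rate_eq_U qUV q₂ hq1 h20 h2m, rate_eq_V qUV q₂ hq1 h20 h2m,
        ← Finset.sum_sub_distrib]
      apply Finset.sum_congr rfl
      intro a _
      simp only [hφv, hπf, hνf, hr, hpU, hpV, Sum.elim_inr]
      ring
    rw [hρ₁', hρ₂', Fintype.sum_sum_type, Finset.mul_sum, Finset.mul_sum]
    congr 1
    · exact Finset.sum_congr rfl fun a _ => by simp only [hw, Sum.elim_inl]; ring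
    · exact Finset.sum_congr rfl fun a _ => by simp only [hw, Sum.elim_inr]; ring
  -- reduce the support
  obtain ⟨w', hw'0, hw'supp, hw'card, hw'π, hw'd, hw'φ⟩ :=
    reduce_support w πf dval φv hw0 hπf1
  set s' := Finset.univ.filter (fun j => w' j ≠ 0) with hs'
  have hw'off : ∀ j, j ∉ s' → w' j = 0 := by
    intro j hj
    by_contra hne
    exact hj (Finset.mem_filter.2 ⟨Finset.mem_univ j, hne⟩)
  -- embedding of the support into A
  set e : (Fin (Fintype.card 𝒰 + 1) ⊕ Fin (Fintype.card 𝒰 + 1)) → Fin (Fintype.card 𝒰 + 1) := fun j => if h : j ∈ s' then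
      Fin.castLE hw'card (s'.equivFin ⟨j, h⟩) else 0 with he
  have hInj : Set.InjOn e s' := by
    intro j1 hj1 j2 hj2 hee
    have hj1' : j1 ∈ s' := hj1
    have hj2' : j2 ∈ s' := hj2
    rw [he] at hee
    simp only [dif_pos hj1', dif_pos hj2'] at hee
    have h1 := Fin.castLE_injective hw'card hee
    have h2 := s'.equivFin.injective h1
    exact congrArg Subtype.val h2
  -- the new joint distribution
  set q' : Fin (Fintype.card 𝒰 + 1) × 𝒰 × 𝒱 → ℝ :=
    fun z => ∑ j ∈ s', if e j = z.1 then w' j * r j z.2.1 z.2.2 else 0 with hq'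
  have hq'0 : ∀ z, 0 ≤ q' z := by
    intro z
    apply Finset.sum_nonneg
    intro j _
    split
    · exact mul_nonneg (hw'0 j) (hr0 j _ _)
    · exact le_refl 0
  have hcollapse : ∀ u v, (∑ b, q' (b, u, v)) = ∑ j ∈ s', w' j * r j u v := by
    intro u v
    simp only [hq']
    rw [Finset.sum_comm]
    apply Finset.sum_congr rfl
    intro j _
    simp [Finset.sum_ite_eq]
  have hsumr : ∀ u v, ∑ j ∈ s', w' j * r j u v = ∑ j, w' j * r j u v := by
    intro u v
    exact Finset.sum_subset (Finset.subset_univ s')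
      (fun j _ hj => by rw [hw'off j hj, zero_mul])
  have hw'margU : ∀ u, ∑ j, w' j * πf j u = pU u := fun u => by rw [hw'π u]; exact wmargU u
  have hq'marg : ∀ u v, (∑ b, q' (b, u, v)) = qUV (u, v) := by
    intro u v
    rw [hcollapse u v, hsumr u v]
    rcases eq_or_ne (pU u) 0 with hu | hu
    · have hz : ∀ j, r j u v = 0 := fun j => hrpU0 j u hu v
      simp only [hz, mul_zero, Finset.sum_const_zero]
      have h1 : qUV (u, v) ≤ pU u :=
        Finset.single_le_sum (f := fun v' => qUV (u, v')) (fun v' _ => hq0 _)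
          (Finset.mem_univ v)
      have h2 := hq0 (u, v)
      rw [hu] at h1
      linarith
    · apply mul_right_cancel₀ hu
      calc (∑ j, w' j * r j u v) * pU u = ∑ j, w' j * (r j u v * pU u) := by
            rw [Finset.sum_mul]; exact Finset.sum_congr rfl fun j _ => by ring
        _ = ∑ j, w' j * (πf j u * qUV (u, v)) :=
            Finset.sum_congr rfl fun j _ => by rw [hciR j u v]
        _ = (∑ j, w' j * πf j u) * qUV (u, v) := by
            rw [Finset.sum_mul]; exact Finset.sum_congr rfl fun j _ => by ring
        _ = pU u * qUV (u, v) := by rw [hw'margU u]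
        _ = qUV (u, v) * pU u := mul_comm _ _
  have hfullr : ∀ u v, ∑ j, w' j * r j u v = qUV (u, v) := by
    intro u v
    rw [← hsumr u v, ← hcollapse u v]
    exact hq'marg u v
  have hq'sum : ∑ z, q' z = 1 := by
    rw [Fintype.sum_prod_type]
    have e1 : ∀ b, ∑ y : 𝒰 × 𝒱, q' (b, y) = ∑ u, ∑ v, q' (b, u, v) := fun b => by
      rw [Fintype.sum_prod_type]
    simp only [e1]
    rw [Finset.sum_comm]
    have e2 : ∀ u, ∑ b, ∑ v, q' (b, u, v) = ∑ v, qUV (u, v) := fun u => by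
      rw [Finset.sum_comm]; exact Finset.sum_congr rfl fun v _ => hq'marg u v
    simp only [e2]
    rw [← hq1, Fintype.sum_prod_type]
  have hPU : ∀ (u : 𝒰) b, (∑ v, q' (b, u, v)) =
      ∑ j ∈ s', if e j = b then w' j * πf j u else 0 := by
    intro u b
    simp only [hq']
    rw [Finset.sum_comm]
    apply Finset.sum_congr rfl
    intro j _
    split
    · rw [← Finset.mul_sum]
    · exact Finset.sum_const_zero
  have hPV : ∀ (v : 𝒱) b, (∑ u, q' (b, u, v)) =
      ∑ j ∈ s', if e j = b then w' j * νf j v else 0 := by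
    intro v b
    simp only [hq']
    rw [Finset.sum_comm]
    apply Finset.sum_congr rfl
    intro j _
    split
    · rw [← Finset.mul_sum]
    · exact Finset.sum_const_zero
  have hq'ci : ∀ b u v, 0 < (∑ a', ∑ v', q' (a', u, v')) →
      q' (b, u, v) * (∑ a', ∑ v', q' (a', u, v')) =
        (∑ v', q' (b, u, v')) * (∑ a', q' (a', u, v)) := by
    intro b u v _
    have hA1 : (∑ a', ∑ v', q' (a', u, v')) = pU u := by
      rw [Finset.sum_comm]
      rw [show (∑ v' : 𝒱, ∑ a', q' (a', u, v')) = ∑ v' : 𝒱, qUV (u, v') from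
        Finset.sum_congr rfl fun v' _ => hq'marg u v']
    have hA2 : (∑ a', q' (a', u, v)) = qUV (u, v) := hq'marg u v
    rw [hA1, hA2]
    have hL : q' (b, u, v) * pU u =
        ∑ j ∈ s', if e j = b then w' j * (πf j u * qUV (u, v)) else 0 := by
      simp only [hq']
      rw [Finset.sum_mul]
      apply Finset.sum_congr rfl
      intro j _
      split
      · rw [mul_assoc, hciR j u v]
      · rw [zero_mul]
    rw [hL, hPU u b, Finset.sum_mul]
    apply Finset.sum_congr rfl
    intro j _
    split
    · ring
    · rw [zero_mul]
  set ψ' : Fin (Fintype.card 𝒰 + 1) → 𝒱 → 𝒰h := fun b =>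
    if h : ∃ j, j ∈ s' ∧ e j = b then ψa h.choose else fun _ => Classical.arbitrary 𝒰h
    with hψ'
  have hψ'e : ∀ j ∈ s', ψ' (e j) = ψa j := by
    intro j hj
    have hex : ∃ j', j' ∈ s' ∧ e j' = e j := ⟨j, hj, rfl⟩
    simp only [hψ']
    rw [dif_pos hex]
    obtain ⟨hc1, hc2⟩ := hex.choose_spec
    have hcj : hex.choose = j := hInj hc1 hj hc2
    rw [hcj]
  have hdist : (∑ a, ∑ u, ∑ v, q' (a, u, v) * d u (ψ' a v)) ≤ θ * D₁ + (1 - θ) * D₂ := by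
    have hb : ∀ b, (∑ u, ∑ v, q' (b, u, v) * d u (ψ' b v))
        = ∑ j ∈ s', if e j = b then w' j * (∑ u, ∑ v, r j u v * d u (ψ' b v)) else 0 := by
      intro b
      have step1 : ∀ u v, q' (b, u, v) * d u (ψ' b v)
          = ∑ j ∈ s', if e j = b then w' j * (r j u v * d u (ψ' b v)) else 0 := by
        intro u v
        simp only [hq']
        rw [Finset.sum_mul]
        apply Finset.sum_congr rfl
        intro j _
        split
        · ring
        · rw [zero_mul]
      simp only [step1]
      calc ∑ u, ∑ v, ∑ j ∈ s', (if e j = b then w' j * (r j u v * d u (ψ' b v)) else 0)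
          = ∑ u, ∑ j ∈ s', ∑ v, (if e j = b then w' j * (r j u v * d u (ψ' b v)) else 0) :=
            Finset.sum_congr rfl fun u _ => Finset.sum_comm
        _ = ∑ j ∈ s', ∑ u, ∑ v, (if e j = b then w' j * (r j u v * d u (ψ' b v)) else 0) :=
            Finset.sum_comm
        _ = ∑ j ∈ s', if e j = b then w' j * (∑ u, ∑ v, r j u v * d u (ψ' b v)) else 0 := by
            apply Finset.sum_congr rfl
            intro j _
            split
            · rw [Finset.mul_sum]
              apply Finset.sum_congr rfl
              intro u _
              rw [Finset.mul_sum]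
            · simp
    simp only [hb]
    rw [Finset.sum_comm]
    have hc : ∀ j ∈ s',
        (∑ b, if e j = b then w' j * (∑ u, ∑ v, r j u v * d u (ψ' b v)) else 0)
        = w' j * dval j := by
      intro j hj
      rw [Finset.sum_ite_eq Finset.univ (e j)
        (fun b => w' j * (∑ u, ∑ v, r j u v * d u (ψ' b v)))]
      rw [if_pos (Finset.mem_univ (e j)), hψ'e j hj]
    rw [Finset.sum_congr rfl hc]
    rw [Finset.sum_subset (Finset.subset_univ s')
      (fun j _ hj => by rw [hw'off j hj, zero_mul])]
    rw [hw'd]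
    exact wdist
  -- the rate of the reduced code
  have hmargs' : ∀ u, ∑ j ∈ s', w' j * πf j u = pU u := by
    intro u
    rw [Finset.sum_subset (Finset.subset_univ s')
      (fun j _ hj => by rw [hw'off j hj, zero_mul])]
    exact hw'margU u
  have hνf1 : ∀ j, ∑ v, νf j v = 1 := by
    intro j
    rw [show (∑ v, νf j v) = ∑ u, πf j u from Finset.sum_comm]
    exact hπf1 j
  have hmargν' : ∀ v, ∑ j ∈ s', w' j * νf j v = pV v := by
    intro v
    rw [Finset.sum_subset (Finset.subset_univ s')
      (fun j _ hj => by rw [hw'off j hj, zero_mul])]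
    calc ∑ j, w' j * νf j v = ∑ j, ∑ u, w' j * r j u v := by
          apply Finset.sum_congr rfl
          intro j _
          rw [hνf]
          exact Finset.mul_sum _ _ _
      _ = ∑ u, ∑ j, w' j * r j u v := Finset.sum_comm
      _ = ∑ u, qUV (u, v) := Finset.sum_congr rfl fun u _ => hfullr u v
      _ = pV v := rfl
  have hrate1 := miJoint_mixture s' e hInj w' πf pU (fun j _ => hπf1 j)
    (fun (u : 𝒰) (b : Fin (Fintype.card 𝒰 + 1)) => ∑ v, q' (b, u, v))
    (fun u b => hPU u b) hmargs'
  have hrate2 := miJoint_mixture s' e hInj w' νf pV (fun j _ => hνf1 j)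
    (fun (v : 𝒱) (b : Fin (Fintype.card 𝒰 + 1)) => ∑ u, q' (b, u, v))
    (fun v b => hPV v b) hmargν'
  refine ⟨_, ⟨q', hq'0, hq'sum, hq'marg, hq'ci, ⟨ψ', hdist⟩, rfl⟩, ?_⟩
  rw [hrate1, hrate2, ← Finset.sum_sub_distrib]
  have hφeq : ∀ j ∈ s',
      w' j * (∑ u, πf j u * Real.log (πf j u / pU u))
        - w' j * (∑ v, νf j v * Real.log (νf j v / pV v)) = w' j * φv j := by
    intro j _
    rw [hφv]
    ring
  rw [Finset.sum_congr rfl hφeq]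
  rw [Finset.sum_subset (Finset.subset_univ s')
    (fun j _ hj => by rw [hw'off j hj, zero_mul])]
  rw [hrate]
  exact hw'φ

/-- On the set of distortion levels `D ≥ 0` with nonempty constraint set, the
Wyner--Ziv rate--distortion function is (i) nonincreasing and (ii) convex. -/
theorem stmt16 {𝒰 𝒱 𝒰h : Type}
    [Fintype 𝒰] [Nonempty 𝒰] [Fintype 𝒱] [Nonempty 𝒱] [Fintype 𝒰h] [Nonempty 𝒰h]
    (qUV : 𝒰 × 𝒱 → ℝ) (hq0 : ∀ uv, 0 ≤ qUV uv) (hq1 : ∑ uv, qUV uv = 1)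
    (d : 𝒰 → 𝒰h → ℝ) (hd : ∀ u uh, 0 ≤ d u uh) :
    (∀ D₁ D₂ : ℝ, 0 ≤ D₁ → 0 ≤ D₂ → D₁ ≤ D₂ →
      (WZset qUV d D₁).Nonempty → (WZset qUV d D₂).Nonempty →
      WZ qUV d D₂ ≤ WZ qUV d D₁) ∧
    (∀ D₁ D₂ θ : ℝ, 0 ≤ D₁ → 0 ≤ D₂ →
      (WZset qUV d D₁).Nonempty → (WZset qUV d D₂).Nonempty →
      0 ≤ θ → θ ≤ 1 →
      WZ qUV d (θ * D₁ + (1 - θ) * D₂) ≤ θ * WZ qUV d D₁ + (1 - θ) * WZ qUV d D₂) := by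
  have hWZ : ∀ D : ℝ, WZ qUV d D = sInf (WZset qUV d D) := fun _ => rfl
  constructor
  · intro D₁ D₂ hD₁ hD₂ h12 hne1 hne2
    rw [hWZ, hWZ]
    apply csInf_le_csInf (WZset_bddBelow qUV d D₂) hne1
    intro ρ hρ
    obtain ⟨q, a1, a2, a3, a4, ⟨ψ, hψ⟩, a6⟩ := hρ
    exact ⟨q, a1, a2, a3, a4, ⟨ψ, le_trans hψ h12⟩, a6⟩
  · intro D₁ D₂ θ hD₁ hD₂ hne1 hne2 hθ0 hθ1
    have key : ∀ ρ₁ ∈ WZset qUV d D₁, ∀ ρ₂ ∈ WZset qUV d D₂,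
        WZ qUV d (θ * D₁ + (1 - θ) * D₂) ≤ θ * ρ₁ + (1 - θ) * ρ₂ := by
      intro ρ₁ h1 ρ₂ h2
      obtain ⟨ρ, hmem, hle⟩ := WZ_convex_point qUV hq0 hq1 d D₁ D₂ θ hθ0 hθ1 h1 h2
      refine le_trans ?_ hle
      rw [hWZ]
      exact csInf_le (WZset_bddBelow qUV d _) hmem
    have step1 : ∀ ρ₁ ∈ WZset qUV d D₁,
        WZ qUV d (θ * D₁ + (1 - θ) * D₂) ≤ θ * ρ₁ + (1 - θ) * WZ qUV d D₂ := by
      intro ρ₁ h1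
      rcases eq_or_lt_of_le (by linarith : (0:ℝ) ≤ 1 - θ) with h | h
      · obtain ⟨ρ₂, h2⟩ := hne2
        have hk := key ρ₁ h1 ρ₂ h2
        have h' : (1:ℝ) - θ = 0 := h.symm
        rw [h', zero_mul] at hk
        rw [h', zero_mul]
        linarith
      · have hWD2 : (WZ qUV d (θ * D₁ + (1 - θ) * D₂) - θ * ρ₁) / (1 - θ) ≤ WZ qUV d D₂ := by
          rw [hWZ D₂]
          apply le_csInf hne2
          intro ρ₂ h2
          rw [div_le_iff₀ h]
          linarith [key ρ₁ h1 ρ₂ h2]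
        rw [div_le_iff₀ h] at hWD2
        linarith
    rcases eq_or_lt_of_le hθ0 with h | h
    · obtain ⟨ρ₁, h1⟩ := hne1
      have hs := step1 ρ₁ h1
      have h' : θ = 0 := h.symm
      rw [h', zero_mul] at hs
      rw [h', zero_mul]
      linarith
    · have hWD1 : (WZ qUV d (θ * D₁ + (1 - θ) * D₂) - (1 - θ) * WZ qUV d D₂) / θ
          ≤ WZ qUV d D₁ := by
        rw [hWZ D₁]
        apply le_csInf hne1
        intro ρ₁ h1
        rw [div_le_iff₀ h]
        linarith [step1 ρ₁ h1]
      rw [div_le_iff₀ h] at hWD1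
      linarith
end Atom
end

section
/- Let 𝒳, 𝒵 be finite types, Q a channel from 𝒳 to 𝒵, and p* a probability mass function on 𝒳; let I(p*;Q) denote the mutual information of the joint law p*(x)·Q(z|x) on 𝒳 × 𝒵. For each positive integer n, let T_n ⊆ 𝒳^n be the set of sequences x^n such that for every x ∈ 𝒳 the empirical relative frequency of x in x^n differs from p*(x) by at most n^{−1/4}. Then there exists a sequence f₁(n) → 0 (depending only on 𝒳, 𝒵, Q, p*) such that for every n and every random vector X^n on 𝒳^n, with Z^n the corresponding memoryless channel output (P(Z^n = z^n | X^n = x^n) = ∏_{i=1}^n Q(z_i | x_i)), one has (1/n)·I(X^n; Z^n) ≤ I(p*;Q) + P(X^n ∉ T_n)·log|𝒳| + f₁(n). -/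
open scoped BigOperators

/-- The set of `n^{-1/4}`-typical sequences for the distribution `pstar`: sequences
whose empirical relative frequencies are within `n^{-1/4}` of `pstar`. -/
def typicalSet {𝒳 : Type} [Fintype 𝒳] [DecidableEq 𝒳] (pstar : 𝒳 → ℝ) (n : ℕ) :
    Set (Fin n → 𝒳) :=
  {xs | ∀ x : 𝒳,
    |((Finset.univ.filter fun i => xs i = x).card : ℝ) / n - pstar x| ≤
      (n : ℝ) ^ (-(1 / 4 : ℝ))}

lemma wyner_log_aux {a b : ℝ} (ha : 0 ≤ a) (hb : 0 ≤ b) (hab : a ≠ 0 → 0 < b) :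
    a * Real.log (b / a) ≤ b - a := by
  rcases eq_or_lt_of_le ha with h | h
  · simp [← h, hb]
  · have hb' := hab h.ne'
    have hba : 0 < b / a := div_pos hb' h
    calc a * Real.log (b / a) ≤ a * (b / a - 1) := by
          exact mul_le_mul_of_nonneg_left (Real.log_le_sub_one_of_pos hba) ha
      _ = b - a := by field_simp

lemma wyner_gibbs {ι : Type*} (s : Finset ι) (a b : ι → ℝ)
    (ha : ∀ i ∈ s, 0 ≤ a i) (hb : ∀ i ∈ s, 0 ≤ b i)
    (hab : ∀ i ∈ s, a i ≠ 0 → 0 < b i) :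
    ∑ i ∈ s, a i - ∑ i ∈ s, b i ≤ ∑ i ∈ s, a i * Real.log (a i / b i) := by
  have key : ∀ i ∈ s, a i - b i ≤ a i * Real.log (a i / b i) := by
    intro i hi
    have h1 : a i * Real.log (b i / a i) ≤ b i - a i :=
      wyner_log_aux (ha i hi) (hb i hi) (hab i hi)
    rcases eq_or_ne (a i) 0 with h | h
    · simpa [h] using (hb i hi)
    · have ha' : 0 < a i := lt_of_le_of_ne (ha i hi) (Ne.symm h)
      have hb' : 0 < b i := hab i hi h
      have : Real.log (a i / b i) = - Real.log (b i / a i) := by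
        rw [← Real.log_inv]; congr 1; field_simp
      rw [this]; nlinarith
  calc ∑ i ∈ s, a i - ∑ i ∈ s, b i = ∑ i ∈ s, (a i - b i) := by rw [Finset.sum_sub_distrib]
    _ ≤ _ := Finset.sum_le_sum key

section Wyner

variable {𝒳 𝒵 : Type} [Fintype 𝒳] [DecidableEq 𝒳] [Nonempty 𝒳] [Fintype 𝒵] [Nonempty 𝒵]

lemma wyner_sum_prod {n : ℕ} {𝒵 : Type} [Fintype 𝒵] (f : Fin n → 𝒵 → ℝ) :
    ∑ z : Fin n → 𝒵, ∏ i, f i (z i) = ∏ i, ∑ w, f i w := by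
  rw [Finset.prod_univ_sum]
  rw [← Fintype.piFinset_univ]

lemma wyner_memoryless {n : ℕ} {𝒵 : Type} [Fintype 𝒵]
    (g : Fin n → 𝒵 → ℝ) (r : 𝒵 → ℝ)
    (hg1 : ∀ i, ∑ w, g i w = 1) (hr : ∀ w, 0 < r w) :
    ∑ z : Fin n → 𝒵, (∏ i, g i (z i)) * Real.log ((∏ i, g i (z i)) / ∏ i, r (z i))
      = ∑ i, ∑ w, g i w * Real.log (g i w / r w) := by
  have pointwise : ∀ z : Fin n → 𝒵,
      (∏ i, g i (z i)) * Real.log ((∏ i, g i (z i)) / ∏ i, r (z i))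
        = ∑ j, (∏ i, g i (z i)) * Real.log (g j (z j) / r (z j)) := by
    intro z
    by_cases hz : ∀ i, g i (z i) ≠ 0
    · have hprod : (∏ i, g i (z i)) / ∏ i, r (z i) = ∏ i, g i (z i) / r (z i) := by
        rw [Finset.prod_div_distrib]
      rw [hprod, Real.log_prod (fun i _ => div_ne_zero (hz i) (hr (z i)).ne'),
        Finset.mul_sum]
    · push_neg at hz
      obtain ⟨i, hi⟩ := hz
      have : (∏ i, g i (z i)) = 0 := Finset.prod_eq_zero (Finset.mem_univ i) hi
      simp [this]
  rw [Finset.sum_congr rfl (fun z _ => pointwise z), Finset.sum_comm]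
  refine Finset.sum_congr rfl (fun j _ => ?_)
  classical
  set F : Fin n → 𝒵 → ℝ :=
    fun i w => if i = j then g i w * Real.log (g i w / r w) else g i w with hF
  have key : ∀ z : Fin n → 𝒵,
      (∏ i, g i (z i)) * Real.log (g j (z j) / r (z j)) = ∏ i, F i (z i) := by
    intro z
    have h1 : ∏ i, g i (z i) = (∏ i ∈ Finset.univ.erase j, g i (z i)) * g j (z j) :=
      (Finset.prod_erase_mul _ _ (Finset.mem_univ j)).symm
    have h2 : ∏ i, F i (z i) = (∏ i ∈ Finset.univ.erase j, F i (z i)) * F j (z j) :=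
      (Finset.prod_erase_mul _ _ (Finset.mem_univ j)).symm
    have h3 : ∏ i ∈ Finset.univ.erase j, F i (z i) = ∏ i ∈ Finset.univ.erase j, g i (z i) := by
      refine Finset.prod_congr rfl (fun i hi => ?_)
      simp [hF, Finset.mem_erase.mp hi |>.1]
    have h4 : F j (z j) = g j (z j) * Real.log (g j (z j) / r (z j)) := by simp [hF]
    rw [h1, h2, h3, h4]; ring
  rw [Finset.sum_congr rfl (fun z _ => key z), wyner_sum_prod F]
  rw [Finset.prod_eq_single j]
  · simp [hF]
  · intro i _ hij
    simp [hF, if_neg hij, hg1 i]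
  · simp

lemma wyner_count {𝒳 : Type} [Fintype 𝒳] [DecidableEq 𝒳] {n : ℕ}
    (xs : Fin n → 𝒳) (D : 𝒳 → ℝ) :
    ∑ i, D (xs i) = ∑ a, ((Finset.univ.filter fun i => xs i = a).card : ℝ) * D a := by
  have : ∀ i, D (xs i) = ∑ a, if xs i = a then D a else 0 := by
    intro i; simp
  rw [Finset.sum_congr rfl (fun i _ => this i), Finset.sum_comm]
  refine Finset.sum_congr rfl (fun a _ => ?_)
  rw [← Finset.sum_filter, Finset.sum_const, nsmul_eq_mul]

lemma wyner_entropy_bound {ι : Type} (B : Finset ι) (μ : ι → ℝ)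
    (hμ0 : ∀ x ∈ B, 0 ≤ μ x) :
    -∑ x ∈ B, μ x * Real.log (μ x) ≤ (∑ x ∈ B, μ x) * Real.log B.card + 1 := by
  set ε := ∑ x ∈ B, μ x with hε
  rcases eq_or_lt_of_le (Finset.sum_nonneg hμ0) with h0 | h0
  · have : ∀ x ∈ B, μ x = 0 := by
      intro x hx
      exact (Finset.sum_eq_zero_iff_of_nonneg hμ0).mp h0.symm x hx
    have hz : ∀ x ∈ B, μ x * Real.log (μ x) = 0 := fun x hx => by rw [this x hx]; simp
    rw [Finset.sum_eq_zero hz]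
    have hε0 : ε = 0 := h0.symm
    rw [hε0]
    norm_num
  · have hBne : B.Nonempty := by
      rcases Finset.eq_empty_or_nonempty B with h | h
      · exfalso; rw [h] at h0; simp at h0
      · exact h
    have hcard : (0 : ℝ) < B.card := by exact_mod_cast Finset.card_pos.mpr hBne
    set t : ℝ := ε / B.card with ht
    have ht0 : 0 < t := div_pos h0 hcard
    have pointwise : ∀ x ∈ B,
        -(μ x * Real.log (μ x)) ≤ (t - μ x) + μ x * Real.log (1 / t) := by
      intro x hx
      rcases eq_or_lt_of_le (hμ0 x hx) with h | h
      · rw [← h]; simp; positivity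
      · have : -(Real.log (μ x)) = Real.log (t / μ x) + Real.log (1 / t) := by
          rw [← Real.log_mul (by positivity) (by positivity)]
          rw [show t / μ x * (1 / t) = (μ x)⁻¹ by field_simp; try ring, Real.log_inv]
        rw [neg_mul_eq_mul_neg, this, mul_add]
        have := wyner_log_aux h.le ht0.le (fun _ => ht0)
        linarith
    have hsum2 : -∑ x ∈ B, μ x * Real.log (μ x)
        ≤ ∑ x ∈ B, ((t - μ x) + μ x * Real.log (1 / t)) := by
      rw [← Finset.sum_neg_distrib]
      exact Finset.sum_le_sum pointwise
    have hsum3 : ∑ x ∈ B, ((t - μ x) + μ x * Real.log (1 / t))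
        = ε * Real.log B.card - ε * Real.log ε := by
      rw [Finset.sum_add_distrib, Finset.sum_sub_distrib, Finset.sum_const,
        ← Finset.sum_mul, ← hε]
      have : Real.log (1 / t) = Real.log B.card - Real.log ε := by
        rw [ht, one_div_div, Real.log_div hcard.ne' h0.ne']
      rw [this, nsmul_eq_mul, ht]
      field_simp
      ring
    have hlast : -(ε * Real.log ε) ≤ 1 := by
      have : Real.log (1 / ε) ≤ 1 / ε - 1 := Real.log_le_sub_one_of_pos (by positivity)
      rw [one_div, Real.log_inv] at this
      have h2 : ε * (-Real.log ε) ≤ ε * (ε⁻¹ - 1) := mul_le_mul_of_nonneg_left this h0.le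
      have h3 : ε * (ε⁻¹ - 1) = 1 - ε := by
        have hε0 : ε ≠ 0 := h0.ne'
        rw [mul_sub, mul_inv_cancel₀ hε0, mul_one]
      nlinarith
    linarith

section Wyner

variable {𝒳 𝒵 : Type} [Fintype 𝒳] [DecidableEq 𝒳] [Nonempty 𝒳] [Fintype 𝒵] [Nonempty 𝒵]

noncomputable def wynerQstar (Q : 𝒳 → 𝒵 → ℝ) (pstar : 𝒳 → ℝ) (z : 𝒵) : ℝ :=
  ∑ x, pstar x * Q x z

noncomputable def wynerDelta (n : ℕ) : ℝ := (1 / 2) * (n : ℝ) ^ (-(1 / 4 : ℝ))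

noncomputable def wynerR (Q : 𝒳 → 𝒵 → ℝ) (pstar : 𝒳 → ℝ) (n : ℕ) (z : 𝒵) : ℝ :=
  (1 - wynerDelta n) * wynerQstar Q pstar z + wynerDelta n / Fintype.card 𝒵

noncomputable def wynerD (Q : 𝒳 → 𝒵 → ℝ) (pstar : 𝒳 → ℝ) (n : ℕ) (a : 𝒳) : ℝ :=
  ∑ z, Q a z * Real.log (Q a z / wynerR Q pstar n z)

noncomputable def wynerF1 (Q : 𝒳 → 𝒵 → ℝ) (pstar : 𝒳 → ℝ) (n : ℕ) : ℝ :=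
  2 / n + (∑ a, pstar a * wynerD Q pstar n a - miJoint (fun x z => pstar x * Q x z))
    + (n : ℝ) ^ (-(1 / 4 : ℝ)) * ∑ a, wynerD Q pstar n a

variable (Q : 𝒳 → 𝒵 → ℝ) (hQ0 : ∀ x z, 0 ≤ Q x z) (hQ1 : ∀ x, ∑ z, Q x z = 1)
  (pstar : 𝒳 → ℝ) (hp0 : ∀ x, 0 ≤ pstar x) (hp1 : ∑ x, pstar x = 1)
  {n : ℕ} (hn : 0 < n)

lemma wyner_delta_pos (hn : 0 < n) : 0 < wynerDelta n := by
  unfold wynerDelta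
  have : (0:ℝ) < (n : ℝ) ^ (-(1 / 4 : ℝ)) :=
    Real.rpow_pos_of_pos (by exact_mod_cast hn) _
  linarith

lemma wyner_delta_le_half (hn : 0 < n) : wynerDelta n ≤ 1 / 2 := by
  unfold wynerDelta
  have h1 : (n : ℝ) ^ (-(1 / 4 : ℝ)) ≤ 1 :=
    Real.rpow_le_one_of_one_le_of_nonpos (by exact_mod_cast hn) (by norm_num)
  linarith

include hp0 hQ0 in
lemma wyner_qstar_nonneg : ∀ z, 0 ≤ wynerQstar Q pstar z := fun z =>
  Finset.sum_nonneg fun x _ => mul_nonneg (hp0 x) (hQ0 x z)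

include hp1 hQ1 in
lemma wyner_qstar_sum : ∑ z, wynerQstar Q pstar z = 1 := by
  unfold wynerQstar
  rw [Finset.sum_comm]
  calc ∑ x, ∑ z, pstar x * Q x z = ∑ x, pstar x * ∑ z, Q x z := by
        simp [Finset.mul_sum]
    _ = 1 := by simp only [hQ1, mul_one, hp1]

include hp0 hQ0 in
lemma wyner_R_pos (hn : 0 < n) : ∀ z, 0 < wynerR Q pstar n z := by
  intro z
  unfold wynerR
  have h1 : 0 ≤ (1 - wynerDelta n) * wynerQstar Q pstar z := by
    apply mul_nonneg
    · have := wyner_delta_le_half (n := n) hn; linarith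
    · exact wyner_qstar_nonneg Q hQ0 pstar hp0 z
  have h2 : 0 < wynerDelta n / Fintype.card 𝒵 := by
    apply div_pos (wyner_delta_pos hn)
    exact_mod_cast Fintype.card_pos
  linarith

include hp0 hp1 hQ0 hQ1 in
lemma wyner_R_sum : ∑ z, wynerR Q pstar n z = 1 := by
  unfold wynerR
  rw [Finset.sum_add_distrib, ← Finset.mul_sum, wyner_qstar_sum Q hQ1 pstar hp1,
    Finset.sum_const, Finset.card_univ, nsmul_eq_mul]
  have : (Fintype.card 𝒵 : ℝ) ≠ 0 := by exact_mod_cast Fintype.card_pos.ne'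
  field_simp
  ring

include hp0 hp1 hQ0 hQ1 in
lemma wyner_D_nonneg (hn : 0 < n) : ∀ a, 0 ≤ wynerD Q pstar n a := by
  intro a
  unfold wynerD
  have := wyner_gibbs Finset.univ (Q a) (wynerR Q pstar n)
    (fun z _ => hQ0 a z) (fun z _ => (wyner_R_pos Q hQ0 pstar hp0 hn z).le)
    (fun z _ _ => wyner_R_pos Q hQ0 pstar hp0 hn z)
  rw [hQ1 a, wyner_R_sum Q hQ0 hQ1 pstar hp0 hp1] at this
  linarith

include hp0 hQ0 hQ1 in
lemma wyner_D_le (hn : 0 < n) :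
    ∀ a, wynerD Q pstar n a ≤ Real.log (2 * Fintype.card 𝒵) + (1/4) * Real.log n := by
  intro a
  have hM : Real.log ((Fintype.card 𝒵 : ℝ) / wynerDelta n)
      = Real.log (2 * Fintype.card 𝒵) + (1/4) * Real.log n := by
    unfold wynerDelta
    have hcard : (0:ℝ) < Fintype.card 𝒵 := by exact_mod_cast Fintype.card_pos
    have hnp : (0:ℝ) < (n:ℝ) := by exact_mod_cast hn
    have hr : (0:ℝ) < (n : ℝ) ^ (-(1 / 4 : ℝ)) := Real.rpow_pos_of_pos hnp _
    rw [show (Fintype.card 𝒵 : ℝ) / ((1/2) * (n : ℝ) ^ (-(1 / 4 : ℝ)))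
        = (2 * Fintype.card 𝒵) * (n : ℝ) ^ ((1 / 4 : ℝ)) by
      rw [Real.rpow_neg hnp.le]
      field_simp]
    rw [Real.log_mul (by positivity) (by positivity), Real.log_rpow hnp]
  rw [← hM]
  set M := Real.log ((Fintype.card 𝒵 : ℝ) / wynerDelta n) with hMdef
  have hδ : 0 < wynerDelta n := wyner_delta_pos hn
  have hcard : (0:ℝ) < Fintype.card 𝒵 := by exact_mod_cast Fintype.card_pos
  have hRlb : ∀ z, wynerDelta n / Fintype.card 𝒵 ≤ wynerR Q pstar n z := by
    intro z
    unfold wynerR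
    have h1 : 0 ≤ (1 - wynerDelta n) * wynerQstar Q pstar z := by
      apply mul_nonneg
      · have := wyner_delta_le_half (n := n) hn; linarith
      · exact wyner_qstar_nonneg Q hQ0 pstar hp0 z
    linarith
  have hQle1 : ∀ z, Q a z ≤ 1 := by
    intro z
    rw [← hQ1 a]
    exact Finset.single_le_sum (fun w _ => hQ0 a w) (Finset.mem_univ z)
  have pointwise : ∀ z, Q a z * Real.log (Q a z / wynerR Q pstar n z) ≤ Q a z * M := by
    intro z
    rcases eq_or_lt_of_le (hQ0 a z) with h | h
    · simp [← h]
    · apply mul_le_mul_of_nonneg_left _ (hQ0 a z)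
      rw [hMdef]
      have hR := wyner_R_pos Q hQ0 pstar hp0 hn z
      apply Real.log_le_log (by positivity)
      have h1 : Q a z / wynerR Q pstar n z ≤ 1 / wynerR Q pstar n z :=
        div_le_div_of_nonneg_right (hQle1 z) hR.le
      refine h1.trans ?_
      rw [div_le_div_iff₀ hR hδ]
      have h2 : wynerDelta n ≤ wynerR Q pstar n z * Fintype.card 𝒵 :=
        (div_le_iff₀ hcard).mp (hRlb z)
      nlinarith
  calc wynerD Q pstar n a ≤ ∑ z, Q a z * M := by
        unfold wynerD; exact Finset.sum_le_sum (fun z _ => pointwise z)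
    _ = M := by rw [← Finset.sum_mul, hQ1 a, one_mul]

include hQ0 hQ1 hp0 in
lemma wyner_gap_identity (hn : 0 < n) :
    ∑ a, pstar a * wynerD Q pstar n a
      = miJoint (fun x z => pstar x * Q x z)
        + ∑ z, wynerQstar Q pstar z
            * Real.log (wynerQstar Q pstar z / wynerR Q pstar n z) := by
  have hm : miJoint (fun x z => pstar x * Q x z)
      = ∑ a, ∑ z, pstar a * Q a z
          * Real.log ((pstar a * Q a z) / (pstar a * wynerQstar Q pstar z)) := by
    unfold miJoint wynerQstar
    refine Finset.sum_congr rfl (fun a _ => Finset.sum_congr rfl (fun z _ => ?_))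
    rw [← Finset.mul_sum, hQ1, mul_one]
  have pointwise : ∀ a z,
      pstar a * (Q a z * Real.log (Q a z / wynerR Q pstar n z))
        = pstar a * Q a z
            * Real.log ((pstar a * Q a z) / (pstar a * wynerQstar Q pstar z))
          + pstar a * Q a z * Real.log (wynerQstar Q pstar z / wynerR Q pstar n z) := by
    intro a z
    rcases eq_or_ne (pstar a * Q a z) 0 with h | h
    · rcases mul_eq_zero.mp h with h' | h' <;> simp [h']
    · obtain ⟨hp, hQ⟩ := mul_ne_zero_iff.mp h
      have hppos : 0 < pstar a := lt_of_le_of_ne (hp0 a) (Ne.symm hp)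
      have hQpos : 0 < Q a z := lt_of_le_of_ne (hQ0 a z) (Ne.symm hQ)
      have hqpos : 0 < wynerQstar Q pstar z := by
        have : pstar a * Q a z ≤ wynerQstar Q pstar z :=
          Finset.single_le_sum (f := fun x => pstar x * Q x z)
            (fun x _ => mul_nonneg (hp0 x) (hQ0 x z)) (Finset.mem_univ a)
        nlinarith
      have hRpos := wyner_R_pos Q hQ0 pstar hp0 hn z
      rw [Real.log_div hQ hRpos.ne', Real.log_div h (by positivity),
        Real.log_div hqpos.ne' hRpos.ne', Real.log_mul hp hQ, Real.log_mul hp hqpos.ne']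
      ring
  calc ∑ a, pstar a * wynerD Q pstar n a
      = ∑ a, ∑ z, pstar a * (Q a z * Real.log (Q a z / wynerR Q pstar n z)) := by
        refine Finset.sum_congr rfl (fun a _ => ?_)
        rw [wynerD, Finset.mul_sum]
    _ = ∑ a, ∑ z, (pstar a * Q a z
            * Real.log ((pstar a * Q a z) / (pstar a * wynerQstar Q pstar z))
          + pstar a * Q a z
            * Real.log (wynerQstar Q pstar z / wynerR Q pstar n z)) := by
        exact Finset.sum_congr rfl fun a _ => Finset.sum_congr rfl fun z _ => pointwise a z
    _ = miJoint (fun x z => pstar x * Q x z)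
        + ∑ z, wynerQstar Q pstar z
            * Real.log (wynerQstar Q pstar z / wynerR Q pstar n z) := by
        rw [Finset.sum_congr rfl (fun a _ => Finset.sum_add_distrib),
          Finset.sum_add_distrib, ← hm]
        congr 1
        rw [Finset.sum_comm]
        refine Finset.sum_congr rfl (fun z _ => ?_)
        rw [← Finset.sum_mul]
        rfl

include hQ0 hQ1 hp0 hp1 in
lemma wyner_gap_nonneg (hn : 0 < n) :
    0 ≤ ∑ z, wynerQstar Q pstar z
        * Real.log (wynerQstar Q pstar z / wynerR Q pstar n z) := by
  have := wyner_gibbs Finset.univ (wynerQstar Q pstar) (wynerR Q pstar n)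
    (fun z _ => wyner_qstar_nonneg Q hQ0 pstar hp0 z)
    (fun z _ => (wyner_R_pos Q hQ0 pstar hp0 hn z).le)
    (fun z _ _ => wyner_R_pos Q hQ0 pstar hp0 hn z)
  rw [wyner_qstar_sum Q hQ1 pstar hp1, wyner_R_sum Q hQ0 hQ1 pstar hp0 hp1] at this
  linarith

include hQ0 hQ1 hp0 hp1 in
lemma wyner_gap_le (hn : 0 < n) :
    ∑ z, wynerQstar Q pstar z
        * Real.log (wynerQstar Q pstar z / wynerR Q pstar n z)
      ≤ -Real.log (1 - wynerDelta n) := by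
  have hδ1 : wynerDelta n ≤ 1/2 := wyner_delta_le_half hn
  have hδ0 : 0 < wynerDelta n := wyner_delta_pos hn
  have pointwise : ∀ z, wynerQstar Q pstar z
      * Real.log (wynerQstar Q pstar z / wynerR Q pstar n z)
      ≤ wynerQstar Q pstar z * Real.log (1 / (1 - wynerDelta n)) := by
    intro z
    have hq0 := wyner_qstar_nonneg Q hQ0 pstar hp0 z
    rcases eq_or_lt_of_le hq0 with h | h
    · simp [← h]
    · apply mul_le_mul_of_nonneg_left _ hq0
      have hR := wyner_R_pos Q hQ0 pstar hp0 hn z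
      apply Real.log_le_log (by positivity)
      have hRlb : (1 - wynerDelta n) * wynerQstar Q pstar z ≤ wynerR Q pstar n z := by
        unfold wynerR
        have : 0 < wynerDelta n / Fintype.card 𝒵 := by
          apply div_pos hδ0; exact_mod_cast Fintype.card_pos
        linarith
      rw [div_le_div_iff₀ hR (by linarith)]
      nlinarith
  calc ∑ z, wynerQstar Q pstar z
        * Real.log (wynerQstar Q pstar z / wynerR Q pstar n z)
      ≤ ∑ z, wynerQstar Q pstar z * Real.log (1 / (1 - wynerDelta n)) :=
        Finset.sum_le_sum (fun z _ => pointwise z)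
    _ = Real.log (1 / (1 - wynerDelta n)) := by
        rw [← Finset.sum_mul, wyner_qstar_sum Q hQ1 pstar hp1, one_mul]
    _ = -Real.log (1 - wynerDelta n) := by rw [one_div, Real.log_inv]

include hQ0 hQ1 hp0 hp1 in
lemma wyner_f1_nonneg (hn : 0 < n) : 0 ≤ wynerF1 Q pstar n := by
  unfold wynerF1
  have h1 : (0:ℝ) ≤ 2 / n := by positivity
  have h2 : 0 ≤ ∑ a, pstar a * wynerD Q pstar n a
      - miJoint (fun x z => pstar x * Q x z) := by
    rw [wyner_gap_identity Q hQ0 hQ1 pstar hp0 hn]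
    have := wyner_gap_nonneg Q hQ0 hQ1 pstar hp0 hp1 hn
    linarith
  have h3 : 0 ≤ (n : ℝ) ^ (-(1 / 4 : ℝ)) * ∑ a, wynerD Q pstar n a := by
    apply mul_nonneg (Real.rpow_nonneg (Nat.cast_nonneg n) _)
    exact Finset.sum_nonneg fun a _ => wyner_D_nonneg Q hQ0 hQ1 pstar hp0 hp1 hn a
  linarith

include hQ0 hQ1 hp0 hp1 in
lemma wyner_f1_le (hn : 0 < n) :
    wynerF1 Q pstar n ≤ 2 / n + (-Real.log (1 - wynerDelta n))
      + (n : ℝ) ^ (-(1 / 4 : ℝ)) * (Fintype.card 𝒳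
          * (Real.log (2 * Fintype.card 𝒵) + (1/4) * Real.log n)) := by
  unfold wynerF1
  have h2 : ∑ a, pstar a * wynerD Q pstar n a
      - miJoint (fun x z => pstar x * Q x z) ≤ -Real.log (1 - wynerDelta n) := by
    rw [wyner_gap_identity Q hQ0 hQ1 pstar hp0 hn]
    have := wyner_gap_le Q hQ0 hQ1 pstar hp0 hp1 hn
    linarith
  have h3 : ∑ a, wynerD Q pstar n a ≤ Fintype.card 𝒳
      * (Real.log (2 * Fintype.card 𝒵) + (1/4) * Real.log n) := by
    calc ∑ a, wynerD Q pstar n a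
        ≤ ∑ _a : 𝒳, (Real.log (2 * Fintype.card 𝒵) + (1/4) * Real.log n) :=
          Finset.sum_le_sum (fun a _ => wyner_D_le Q hQ0 hQ1 pstar hp0 hn a)
      _ = _ := by rw [Finset.sum_const, Finset.card_univ, nsmul_eq_mul]
  have h4 : (0:ℝ) ≤ (n : ℝ) ^ (-(1 / 4 : ℝ)) := Real.rpow_nonneg (Nat.cast_nonneg n) _
  have := mul_le_mul_of_nonneg_left h3 h4
  linarith

include hQ0 hQ1 hp0 hp1 in
lemma wyner_f1_tendsto :
    Filter.Tendsto (wynerF1 Q pstar) Filter.atTop (nhds 0) := by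
  have hrpow : Filter.Tendsto (fun k : ℕ => ((k : ℝ)) ^ (-(1 / 4 : ℝ)))
      Filter.atTop (nhds 0) :=
    (tendsto_rpow_neg_atTop (by norm_num)).comp tendsto_natCast_atTop_atTop
  have h1 : Filter.Tendsto (fun k : ℕ => (2 : ℝ) / k) Filter.atTop (nhds 0) :=
    tendsto_const_div_atTop_nhds_zero_nat 2
  have hδ : Filter.Tendsto (fun k : ℕ => wynerDelta k) Filter.atTop (nhds 0) := by
    unfold wynerDelta
    have := hrpow.const_mul (1/2 : ℝ)
    simpa using this
  have h2 : Filter.Tendsto (fun k : ℕ => -Real.log (1 - wynerDelta k))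
      Filter.atTop (nhds 0) := by
    have hc : ContinuousAt (fun t : ℝ => -Real.log (1 - t)) 0 := by
      have hne : (1:ℝ) - 0 ≠ 0 := by norm_num
      exact (((Real.continuousAt_log hne).comp (by fun_prop)).neg)
    have := hc.tendsto.comp hδ
    simpa [Function.comp_def] using this
  have hlog : Filter.Tendsto
      (fun k : ℕ => (k : ℝ) ^ (-(1 / 4 : ℝ)) * Real.log k) Filter.atTop (nhds 0) := by
    have hx : Filter.Tendsto (fun x : ℝ => Real.log x / x ^ (1/4 : ℝ))
        Filter.atTop (nhds 0) :=
      (isLittleO_log_rpow_atTop (by norm_num)).tendsto_div_nhds_zero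
    have := hx.comp (tendsto_natCast_atTop_atTop (R := ℝ))
    apply this.congr'
    filter_upwards [Filter.eventually_ge_atTop 1] with k hk
    have hk' : (0:ℝ) < (k : ℝ) := by exact_mod_cast hk
    simp only [Function.comp_apply]
    rw [Real.rpow_neg hk'.le, div_eq_mul_inv]
    ring
  have h3 : Filter.Tendsto (fun k : ℕ => (k : ℝ) ^ (-(1 / 4 : ℝ))
      * (Fintype.card 𝒳 * (Real.log (2 * Fintype.card 𝒵) + (1/4) * Real.log k)))
      Filter.atTop (nhds 0) := by
    have : ∀ k : ℕ, (k : ℝ) ^ (-(1 / 4 : ℝ))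
        * (Fintype.card 𝒳 * (Real.log (2 * Fintype.card 𝒵) + (1/4) * Real.log k))
        = (Fintype.card 𝒳 * Real.log (2 * Fintype.card 𝒵)) * ((k:ℝ) ^ (-(1 / 4 : ℝ)))
          + (Fintype.card 𝒳 * (1/4)) * ((k:ℝ) ^ (-(1 / 4 : ℝ)) * Real.log k) := by
      intro k; ring
    rw [funext this]
    have := (hrpow.const_mul ((Fintype.card 𝒳 : ℝ) * Real.log (2 * Fintype.card 𝒵))).add
      (hlog.const_mul ((Fintype.card 𝒳 : ℝ) * (1/4)))
    simpa using this
  have hupper := (h1.add h2).add h3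
  simp only [add_zero] at hupper
  apply tendsto_of_tendsto_of_tendsto_of_le_of_le' tendsto_const_nhds hupper
  · filter_upwards [Filter.eventually_gt_atTop 0] with k hk
    exact wyner_f1_nonneg Q hQ0 hQ1 pstar hp0 hp1 hk
  · filter_upwards [Filter.eventually_gt_atTop 0] with k hk
    exact wyner_f1_le Q hQ0 hQ1 pstar hp0 hp1 hk

end Wyner

/-- The abstract core bound. -/
lemma wyner_abstract {X Z : Type} [Fintype X] [Nonempty X] [Fintype Z]
    (μ : X → ℝ) (W : X → Z → ℝ) (R : Z → ℝ) (T : Set X) (C : ℝ)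
    (hμ0 : ∀ x, 0 ≤ μ x) (hμ1 : ∑ x, μ x = 1)
    (hW0 : ∀ x z, 0 ≤ W x z) (hW1 : ∀ x, ∑ z, W x z = 1)
    (hR0 : ∀ z, 0 < R z) (hRsum : ∑ z, R z = 1)
    (hC : 0 ≤ C)
    (hT : ∀ x ∈ T, ∑ z, W x z * Real.log (W x z / R z) ≤ C) :
    miJoint (fun x z => μ x * W x z)
      ≤ C + (∑ x, Set.indicator Tᶜ μ x) * Real.log (Fintype.card X) + 2 := by
  classical
  have hPX : ∀ x, ∑ z, μ x * W x z = μ x := fun x => by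
    rw [← Finset.mul_sum, hW1, mul_one]
  set A : Finset X := Finset.univ.filter (fun x => x ∈ T) with hA
  set B : Finset X := Finset.univ.filter (fun x => x ∉ T) with hB
  set ε := ∑ x ∈ B, μ x with hε
  set PZ := fun z => ∑ x, μ x * W x z with hPZ
  set cA := fun z => ∑ x ∈ A, μ x * W x z with hcA
  set cB := fun z => ∑ x ∈ B, μ x * W x z with hcB
  have hpart : (∑ x ∈ A, μ x) + ε = 1 := by
    rw [hε, hA, hB, Finset.sum_filter_add_sum_filter_not, hμ1]
  have hε0 : 0 ≤ ε := Finset.sum_nonneg fun x _ => hμ0 x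
  have hAsum0 : 0 ≤ ∑ x ∈ A, μ x := Finset.sum_nonneg fun x _ => hμ0 x
  have hε1 : ε ≤ 1 := by linarith
  have hind : ∑ x, Set.indicator Tᶜ μ x = ε := by
    rw [hε, hB, Finset.sum_filter]
    refine Finset.sum_congr rfl fun x _ => ?_
    rw [Set.indicator_apply]
    simp [Set.mem_compl_iff]
  have hcA0 : ∀ z, 0 ≤ cA z :=
    fun z => Finset.sum_nonneg fun x _ => mul_nonneg (hμ0 x) (hW0 x z)
  have hcB0 : ∀ z, 0 ≤ cB z :=
    fun z => Finset.sum_nonneg fun x _ => mul_nonneg (hμ0 x) (hW0 x z)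
  have hcAle : ∀ z, cA z ≤ PZ z := fun z =>
    Finset.sum_le_sum_of_subset_of_nonneg (Finset.filter_subset _ _)
      (fun x _ _ => mul_nonneg (hμ0 x) (hW0 x z))
  have hcBle : ∀ z, cB z ≤ PZ z := fun z =>
    Finset.sum_le_sum_of_subset_of_nonneg (Finset.filter_subset _ _)
      (fun x _ _ => mul_nonneg (hμ0 x) (hW0 x z))
  have hcAsum : ∑ z, cA z = ∑ x ∈ A, μ x := by
    rw [hcA, Finset.sum_comm]
    exact Finset.sum_congr rfl fun x _ => hPX x
  have hcBsum : ∑ z, cB z = ε := by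
    rw [hcB, hε, Finset.sum_comm]
    exact Finset.sum_congr rfl fun x _ => hPX x
  have hMI : miJoint (fun x z => μ x * W x z)
      = ∑ x, ∑ z, μ x * W x z * Real.log (μ x * W x z / (μ x * PZ z)) := by
    unfold miJoint
    refine Finset.sum_congr rfl fun x _ => Finset.sum_congr rfl fun z _ => ?_
    rw [hPX x]
  -- Part A
  have decompA : ∀ x ∈ A, ∀ z : Z,
      μ x * W x z * Real.log (μ x * W x z / (μ x * PZ z))
        = μ x * W x z * Real.log (W x z / R z)
          + μ x * W x z * Real.log (R z / cA z)
          + μ x * W x z * Real.log (cA z / PZ z) := by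
    intro x hxA z
    rcases eq_or_ne (μ x * W x z) 0 with h | h
    · rw [h]; ring
    · obtain ⟨hμx, hWx⟩ := mul_ne_zero_iff.mp h
      have hμp : 0 < μ x := lt_of_le_of_ne (hμ0 x) (Ne.symm hμx)
      have hWp : 0 < W x z := lt_of_le_of_ne (hW0 x z) (Ne.symm hWx)
      have hcAp : 0 < cA z :=
        lt_of_lt_of_le (mul_pos hμp hWp)
          (Finset.single_le_sum (f := fun x' => μ x' * W x' z)
            (fun x' _ => mul_nonneg (hμ0 x') (hW0 x' z)) hxA)
      have hPZp : 0 < PZ z := lt_of_lt_of_le hcAp (hcAle z)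
      have hRp := hR0 z
      rw [show μ x * W x z / (μ x * PZ z) = W x z / PZ z from
        mul_div_mul_left _ _ hμx]
      rw [Real.log_div hWx hPZp.ne', Real.log_div hWx hRp.ne',
        Real.log_div hRp.ne' hcAp.ne', Real.log_div hcAp.ne' hPZp.ne']
      ring
  have hSA : ∑ x ∈ A, ∑ z, μ x * W x z * Real.log (μ x * W x z / (μ x * PZ z))
      ≤ C + ε := by
    have hsplit : ∑ x ∈ A, ∑ z, μ x * W x z * Real.log (μ x * W x z / (μ x * PZ z))
        = (∑ x ∈ A, ∑ z, μ x * W x z * Real.log (W x z / R z))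
          + (∑ x ∈ A, ∑ z, μ x * W x z * Real.log (R z / cA z))
          + (∑ x ∈ A, ∑ z, μ x * W x z * Real.log (cA z / PZ z)) := by
      rw [← Finset.sum_add_distrib, ← Finset.sum_add_distrib]
      refine Finset.sum_congr rfl fun x hx => ?_
      rw [← Finset.sum_add_distrib, ← Finset.sum_add_distrib]
      exact Finset.sum_congr rfl fun z _ => decompA x hx z
    have hT1 : ∑ x ∈ A, ∑ z, μ x * W x z * Real.log (W x z / R z) ≤ C := by
      have step : ∀ x ∈ A, ∑ z, μ x * W x z * Real.log (W x z / R z) ≤ μ x * C := by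
        intro x hx
        have hxT : x ∈ T := (Finset.mem_filter.mp hx).2
        calc ∑ z, μ x * W x z * Real.log (W x z / R z)
            = μ x * ∑ z, W x z * Real.log (W x z / R z) := by
              rw [Finset.mul_sum]; exact Finset.sum_congr rfl fun z _ => by ring
          _ ≤ μ x * C := mul_le_mul_of_nonneg_left (hT x hxT) (hμ0 x)
      calc ∑ x ∈ A, ∑ z, μ x * W x z * Real.log (W x z / R z)
          ≤ ∑ x ∈ A, μ x * C := Finset.sum_le_sum step
        _ = (∑ x ∈ A, μ x) * C := by rw [Finset.sum_mul]
        _ ≤ 1 * C := mul_le_mul_of_nonneg_right (by linarith) hC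
        _ = C := one_mul C
    have hT2 : ∑ x ∈ A, ∑ z, μ x * W x z * Real.log (R z / cA z) ≤ ε := by
      have hswap : ∑ x ∈ A, ∑ z, μ x * W x z * Real.log (R z / cA z)
          = ∑ z, cA z * Real.log (R z / cA z) := by
        rw [Finset.sum_comm]
        exact Finset.sum_congr rfl fun z _ => by rw [hcA, Finset.sum_mul]
      rw [hswap]
      calc ∑ z, cA z * Real.log (R z / cA z) ≤ ∑ z, (R z - cA z) :=
            Finset.sum_le_sum fun z _ =>
              wyner_log_aux (hcA0 z) (hR0 z).le (fun _ => hR0 z)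
        _ = 1 - ∑ x ∈ A, μ x := by rw [Finset.sum_sub_distrib, hRsum, hcAsum]
        _ = ε := by linarith
    have hT3 : ∑ x ∈ A, ∑ z, μ x * W x z * Real.log (cA z / PZ z) ≤ 0 := by
      have hswap : ∑ x ∈ A, ∑ z, μ x * W x z * Real.log (cA z / PZ z)
          = ∑ z, cA z * Real.log (cA z / PZ z) := by
        rw [Finset.sum_comm]
        exact Finset.sum_congr rfl fun z _ => by rw [hcA, Finset.sum_mul]
      rw [hswap]
      apply Finset.sum_nonpos
      intro z _
      rcases eq_or_ne (cA z) 0 with h | h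
      · rw [h]; simp
      · have hcAp : 0 < cA z := lt_of_le_of_ne (hcA0 z) (Ne.symm h)
        have hPZp : 0 < PZ z := lt_of_lt_of_le hcAp (hcAle z)
        have hlog : Real.log (cA z / PZ z) ≤ 0 :=
          Real.log_nonpos (by positivity) ((div_le_one hPZp).mpr (hcAle z))
        have := mul_le_mul_of_nonneg_left hlog (hcA0 z)
        simpa using this
    linarith [hsplit, hT1, hT2, hT3]
  -- Part B
  have decompB : ∀ x ∈ B, ∀ z : Z,
      μ x * W x z * Real.log (μ x * W x z / (μ x * PZ z))
        = μ x * W x z * Real.log (μ x * W x z / cB z)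
          + μ x * W x z * Real.log (cB z / PZ z)
          + μ x * W x z * (-Real.log (μ x)) := by
    intro x hxB z
    rcases eq_or_ne (μ x * W x z) 0 with h | h
    · rw [h]; ring
    · obtain ⟨hμx, hWx⟩ := mul_ne_zero_iff.mp h
      have hμp : 0 < μ x := lt_of_le_of_ne (hμ0 x) (Ne.symm hμx)
      have hWp : 0 < W x z := lt_of_le_of_ne (hW0 x z) (Ne.symm hWx)
      have hcBp : 0 < cB z :=
        lt_of_lt_of_le (mul_pos hμp hWp)
          (Finset.single_le_sum (f := fun x' => μ x' * W x' z)
            (fun x' _ => mul_nonneg (hμ0 x') (hW0 x' z)) hxB)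
      have hPZp : 0 < PZ z := lt_of_lt_of_le hcBp (hcBle z)
      rw [Real.log_div h (mul_pos hμp hPZp).ne', Real.log_mul hμx hPZp.ne',
        Real.log_div h hcBp.ne', Real.log_div hcBp.ne' hPZp.ne']
      ring
  have hSB : ∑ x ∈ B, ∑ z, μ x * W x z * Real.log (μ x * W x z / (μ x * PZ z))
      ≤ ε * Real.log (Fintype.card X) + 1 := by
    have hsplit : ∑ x ∈ B, ∑ z, μ x * W x z * Real.log (μ x * W x z / (μ x * PZ z))
        = (∑ x ∈ B, ∑ z, μ x * W x z * Real.log (μ x * W x z / cB z))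
          + (∑ x ∈ B, ∑ z, μ x * W x z * Real.log (cB z / PZ z))
          + (∑ x ∈ B, ∑ z, μ x * W x z * (-Real.log (μ x))) := by
      rw [← Finset.sum_add_distrib, ← Finset.sum_add_distrib]
      refine Finset.sum_congr rfl fun x hx => ?_
      rw [← Finset.sum_add_distrib, ← Finset.sum_add_distrib]
      exact Finset.sum_congr rfl fun z _ => decompB x hx z
    have hT1 : ∑ x ∈ B, ∑ z, μ x * W x z * Real.log (μ x * W x z / cB z) ≤ 0 := by
      apply Finset.sum_nonpos
      intro x hx
      apply Finset.sum_nonpos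
      intro z _
      rcases eq_or_ne (μ x * W x z) 0 with h | h
      · rw [h]; simp
      · have hp : 0 < μ x * W x z :=
          lt_of_le_of_ne (mul_nonneg (hμ0 x) (hW0 x z)) (Ne.symm h)
        have hcBp : 0 < cB z := lt_of_lt_of_le hp
          (Finset.single_le_sum (f := fun x' => μ x' * W x' z)
            (fun x' _ => mul_nonneg (hμ0 x') (hW0 x' z)) hx)
        have hle : μ x * W x z ≤ cB z :=
          Finset.single_le_sum (f := fun x' => μ x' * W x' z)
            (fun x' _ => mul_nonneg (hμ0 x') (hW0 x' z)) hx
        have hlog : Real.log (μ x * W x z / cB z) ≤ 0 :=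
          Real.log_nonpos (by positivity) ((div_le_one hcBp).mpr hle)
        have := mul_le_mul_of_nonneg_left hlog hp.le
        simpa using this
    have hT2 : ∑ x ∈ B, ∑ z, μ x * W x z * Real.log (cB z / PZ z) ≤ 0 := by
      have hswap : ∑ x ∈ B, ∑ z, μ x * W x z * Real.log (cB z / PZ z)
          = ∑ z, cB z * Real.log (cB z / PZ z) := by
        rw [Finset.sum_comm]
        exact Finset.sum_congr rfl fun z _ => by rw [hcB, Finset.sum_mul]
      rw [hswap]
      apply Finset.sum_nonpos
      intro z _
      rcases eq_or_ne (cB z) 0 with h | h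
      · rw [h]; simp
      · have hcBp : 0 < cB z := lt_of_le_of_ne (hcB0 z) (Ne.symm h)
        have hPZp : 0 < PZ z := lt_of_lt_of_le hcBp (hcBle z)
        have hlog : Real.log (cB z / PZ z) ≤ 0 :=
          Real.log_nonpos (by positivity) ((div_le_one hPZp).mpr (hcBle z))
        have := mul_le_mul_of_nonneg_left hlog (hcB0 z)
        simpa using this
    have hT3 : ∑ x ∈ B, ∑ z, μ x * W x z * (-Real.log (μ x))
        ≤ ε * Real.log (Fintype.card X) + 1 := by
      have heq : ∑ x ∈ B, ∑ z, μ x * W x z * (-Real.log (μ x))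
          = -∑ x ∈ B, μ x * Real.log (μ x) := by
        rw [← Finset.sum_neg_distrib]
        refine Finset.sum_congr rfl fun x _ => ?_
        rw [← Finset.sum_mul, hPX x]
        ring
      rw [heq]
      have h1 := wyner_entropy_bound B μ (fun x _ => hμ0 x)
      have h2 : (∑ x ∈ B, μ x) * Real.log B.card ≤ ε * Real.log (Fintype.card X) := by
        rw [← hε]
        apply mul_le_mul_of_nonneg_left _ hε0
        rcases Nat.eq_zero_or_pos B.card with h | h
        · rw [h]
          simp only [Nat.cast_zero, Real.log_zero]
          apply Real.log_nonneg
          exact_mod_cast Fintype.card_pos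
        · apply Real.log_le_log (by exact_mod_cast h)
          exact_mod_cast Finset.card_le_univ B
      linarith
    linarith [hsplit, hT1, hT2, hT3]
  rw [hMI, ← Finset.sum_filter_add_sum_filter_not Finset.univ (fun x => x ∈ T)
    (fun x => ∑ z, μ x * W x z * Real.log (μ x * W x z / (μ x * PZ z))), hind]
  have : ε * Real.log (Fintype.card X) ≤ ε * Real.log (Fintype.card X) := le_refl _
  linarith [hSA, hSB]

set_option maxHeartbeats 1000000 in
/-- Wyner's Lemma 8: there is a vanishing sequence `f₁(n)` (depending only on the
channel `Q` and the reference distribution `pstar`) such that for every input law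
`μX` on `𝒳^n`, with `Z^n` the memoryless output of `Q`,
`(1/n)·I(X^n;Z^n) ≤ I(p*;Q) + P(X^n ∉ T_n)·log|𝒳| + f₁(n)`. -/
theorem stmt17 {𝒳 𝒵 : Type} [Fintype 𝒳] [DecidableEq 𝒳] [Nonempty 𝒳]
    [Fintype 𝒵] [Nonempty 𝒵]
    (Q : 𝒳 → 𝒵 → ℝ) (hQ0 : ∀ x z, 0 ≤ Q x z) (hQ1 : ∀ x, ∑ z, Q x z = 1)
    (pstar : 𝒳 → ℝ) (hp0 : ∀ x, 0 ≤ pstar x) (hp1 : ∑ x, pstar x = 1) :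
    ∃ f₁ : ℕ → ℝ, Filter.Tendsto f₁ Filter.atTop (nhds 0) ∧
      ∀ n : ℕ, 0 < n → ∀ μX : (Fin n → 𝒳) → ℝ,
        (∀ xs, 0 ≤ μX xs) → (∑ xs, μX xs = 1) →
        (1 / n : ℝ) *
            miJoint (fun (xs : Fin n → 𝒳) (zs : Fin n → 𝒵) =>
              μX xs * ∏ i, Q (xs i) (zs i)) ≤
          miJoint (fun x z => pstar x * Q x z)
            + (∑ xs, Set.indicator ((typicalSet pstar n)ᶜ) μX xs) *
                Real.log (Fintype.card 𝒳)
            + f₁ n := by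
  classical
  refine ⟨wynerF1 Q pstar, wyner_f1_tendsto Q hQ0 hQ1 pstar hp0 hp1, ?_⟩
  intro n hn μX hμ0 hμ1
  have hn' : (0:ℝ) < n := by exact_mod_cast hn
  set η := (n:ℝ)^(-(1/4:ℝ)) with hη
  set Cn := ∑ a, pstar a * wynerD Q pstar n a + η * ∑ a, wynerD Q pstar n a with hCn
  have hD0 : ∀ a, 0 ≤ wynerD Q pstar n a := wyner_D_nonneg Q hQ0 hQ1 pstar hp0 hp1 hn
  have hη0 : 0 ≤ η := Real.rpow_nonneg (Nat.cast_nonneg n) _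
  have hCn0 : 0 ≤ Cn := by
    rw [hCn]
    have h1 : 0 ≤ ∑ a, pstar a * wynerD Q pstar n a :=
      Finset.sum_nonneg fun a _ => mul_nonneg (hp0 a) (hD0 a)
    have h2 : 0 ≤ η * ∑ a, wynerD Q pstar n a :=
      mul_nonneg hη0 (Finset.sum_nonneg fun a _ => hD0 a)
    linarith
  have hW1 : ∀ xs : Fin n → 𝒳, ∑ zs : Fin n → 𝒵, ∏ i, Q (xs i) (zs i) = 1 := by
    intro xs
    calc ∑ zs : Fin n → 𝒵, ∏ i, Q (xs i) (zs i) = ∏ i, ∑ w, Q (xs i) w :=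
          wyner_sum_prod (fun i w => Q (xs i) w)
      _ = 1 := by simp [hQ1]
  have hR0 : ∀ zs : Fin n → 𝒵, 0 < ∏ i, wynerR Q pstar n (zs i) :=
    fun zs => Finset.prod_pos fun i _ => wyner_R_pos Q hQ0 pstar hp0 hn _
  have hRsum : ∑ zs : Fin n → 𝒵, ∏ i, wynerR Q pstar n (zs i) = 1 := by
    calc ∑ zs : Fin n → 𝒵, ∏ i, wynerR Q pstar n (zs i)
        = ∏ _i : Fin n, ∑ w, wynerR Q pstar n w :=
          wyner_sum_prod (fun _ w => wynerR Q pstar n w)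
      _ = 1 := by simp [wyner_R_sum Q hQ0 hQ1 pstar hp0 hp1]
  have hT : ∀ xs ∈ typicalSet pstar n,
      ∑ zs : Fin n → 𝒵, (∏ i, Q (xs i) (zs i))
          * Real.log ((∏ i, Q (xs i) (zs i)) / ∏ i, wynerR Q pstar n (zs i))
        ≤ (n:ℝ) * Cn := by
    intro xs hxs
    have hmem := wyner_memoryless (fun i => Q (xs i)) (wynerR Q pstar n)
      (fun i => hQ1 (xs i)) (wyner_R_pos Q hQ0 pstar hp0 hn)
    calc ∑ zs : Fin n → 𝒵, (∏ i, Q (xs i) (zs i))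
          * Real.log ((∏ i, Q (xs i) (zs i)) / ∏ i, wynerR Q pstar n (zs i))
        = ∑ i, wynerD Q pstar n (xs i) := hmem
      _ = ∑ a, ((Finset.univ.filter fun i => xs i = a).card : ℝ) * wynerD Q pstar n a :=
          wyner_count xs (wynerD Q pstar n)
      _ ≤ ∑ a, ((n:ℝ) * pstar a + (n:ℝ) * η) * wynerD Q pstar n a := by
          refine Finset.sum_le_sum fun a _ => ?_
          refine mul_le_mul_of_nonneg_right ?_ (hD0 a)
          have h1 := (abs_le.mp (hxs a)).2
          rw [hη]
          have h2 : ((Finset.univ.filter fun i => xs i = a).card : ℝ) / n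
              ≤ pstar a + (n:ℝ)^(-(1/4:ℝ)) := by linarith
          calc ((Finset.univ.filter fun i => xs i = a).card : ℝ)
              = (((Finset.univ.filter fun i => xs i = a).card : ℝ) / n) * n := by
                field_simp
            _ ≤ (pstar a + (n:ℝ)^(-(1/4:ℝ))) * n :=
                mul_le_mul_of_nonneg_right h2 hn'.le
            _ = (n:ℝ) * pstar a + (n:ℝ) * (n:ℝ)^(-(1/4:ℝ)) := by ring
      _ = (n:ℝ) * Cn := by
          rw [hCn]
          rw [Finset.sum_congr rfl (fun a _ => show
            ((n:ℝ) * pstar a + (n:ℝ) * η) * wynerD Q pstar n a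
              = (n:ℝ) * (pstar a * wynerD Q pstar n a)
                + ((n:ℝ) * η) * wynerD Q pstar n a by ring)]
          rw [Finset.sum_add_distrib, ← Finset.mul_sum, ← Finset.mul_sum]
          ring
  have habs := wyner_abstract μX
    (fun (xs : Fin n → 𝒳) (zs : Fin n → 𝒵) => ∏ i, Q (xs i) (zs i))
    (fun (zs : Fin n → 𝒵) => ∏ i, wynerR Q pstar n (zs i)) (typicalSet pstar n)
    ((n:ℝ) * Cn)
    hμ0 hμ1 (fun xs zs => Finset.prod_nonneg fun i _ => hQ0 _ _) hW1 hR0 hRsum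
    (by positivity) hT
  have hcard : Real.log ((Fintype.card (Fin n → 𝒳) : ℕ) : ℝ)
      = (n:ℝ) * Real.log (Fintype.card 𝒳) := by
    rw [Fintype.card_fun, Fintype.card_fin]
    push_cast
    rw [Real.log_pow]
  rw [hcard] at habs
  have habs' : miJoint (fun (xs : Fin n → 𝒳) (zs : Fin n → 𝒵) =>
      μX xs * ∏ i, Q (xs i) (zs i))
      ≤ (n:ℝ) * Cn + (∑ xs, Set.indicator ((typicalSet pstar n)ᶜ) μX xs)
          * ((n:ℝ) * Real.log (Fintype.card 𝒳)) + 2 := habs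
  have hnne : (n:ℝ) ≠ 0 := hn'.ne'
  calc (1 / n : ℝ) * miJoint (fun (xs : Fin n → 𝒳) (zs : Fin n → 𝒵) =>
        μX xs * ∏ i, Q (xs i) (zs i))
      ≤ (1 / n : ℝ) * ((n:ℝ) * Cn
          + (∑ xs, Set.indicator ((typicalSet pstar n)ᶜ) μX xs)
              * ((n:ℝ) * Real.log (Fintype.card 𝒳)) + 2) :=
        mul_le_mul_of_nonneg_left habs' (by positivity)
    _ = Cn + (∑ xs, Set.indicator ((typicalSet pstar n)ᶜ) μX xs)
          * Real.log (Fintype.card 𝒳) + 2 / n := by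
        field_simp
    _ = miJoint (fun x z => pstar x * Q x z)
          + (∑ xs, Set.indicator ((typicalSet pstar n)ᶜ) μX xs)
              * Real.log (Fintype.card 𝒳) + wynerF1 Q pstar n := by
        simp only [wynerF1, hCn, hη]
        ring
end Wyner
end
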